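/- arXiv:1310.8371 — 6 statements merged into one kernel-verified Lean document; each statement's English description precedes it below -/
import Mathlib

section
/- For a, b, c, d ∈ ℂ, the Neveu–Schwarz modules SA_{a,b} and SA_{c,d} are isomorphic if and only if one of the following holds: (i) a − c ∈ ℤ and b = d; (ii) a ∉ ℤ, a − c ∈ Z, b = 1 and d = 1/2; (iii) a ∉ Z, a − c ∈ Z, b = 1/2 and d = 1. -/
noncomputable section

open Submodule

/-- The underlying data of a `ℤ/2`-graded complex vector space equipped with
operators `L m` (`m ∈ ℤ`) and `G k` (`k ∈ ℤ`, where `G k` represents the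
operator `G_{k+1/2}` indexed by the half-integer `k + 1/2`). -/
structure PreNSMod where
  carrier : Type
  [acg : AddCommGroup carrier]
  [mod : Module ℂ carrier]
  even : Submodule ℂ carrier
  odd : Submodule ℂ carrier
  compl : IsCompl even odd
  L : ℤ → carrier →ₗ[ℂ] carrier
  G : ℤ → carrier →ₗ[ℂ] carrier

attribute [instance] PreNSMod.acg PreNSMod.mod

/-- A Neveu–Schwarz module of central charge `c`. -/
structure NSMod (c : ℂ) extends PreNSMod where
  mapsL_even : ∀ (m : ℤ), ∀ v ∈ even, L m v ∈ even
  mapsL_odd : ∀ (m : ℤ), ∀ v ∈ odd, L m v ∈ odd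
  mapsG_even : ∀ (k : ℤ), ∀ v ∈ even, G k v ∈ odd
  mapsG_odd : ∀ (k : ℤ), ∀ v ∈ odd, G k v ∈ even
  rel_LL : ∀ (m n : ℤ) (v : carrier),
    L m (L n v) - L n (L m v)
      = ((n : ℂ) - (m : ℂ)) • L (m + n) v
        + (if m + n = 0 then (((m : ℂ) ^ 3 - (m : ℂ)) / 12) * c else 0) • v
  rel_LG : ∀ (m k : ℤ) (v : carrier),
    L m (G k v) - G k (L m v) = (((k : ℂ) + 1 / 2) - (m : ℂ) / 2) • G (m + k) v
  rel_GG : ∀ (k l : ℤ) (v : carrier),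
    G k (G l v) + G l (G k v)
      = (2 : ℂ) • L (k + l + 1) v
        - (if k + l + 1 = 0 then (1 / 3) * (((k : ℂ) + 1 / 2) ^ 2 - 1 / 4) * c else 0) • v

/-- A submodule (invariant subspace) of a Neveu–Schwarz module. -/
def NSMod.IsSubmodule {c : ℂ} (S : NSMod c) (W : Submodule ℂ S.carrier) : Prop :=
  (∀ (m : ℤ), ∀ v ∈ W, S.L m v ∈ W) ∧ (∀ (k : ℤ), ∀ v ∈ W, S.G k v ∈ W)

/-- Simplicity (irreducibility) of a Neveu–Schwarz module. -/
def NSMod.IsSimple {c : ℂ} (S : NSMod c) : Prop :=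
  (∃ v : S.carrier, v ≠ 0) ∧
    ∀ W : Submodule ℂ S.carrier, S.IsSubmodule W → W = ⊥ ∨ W = ⊤

/-- `W` is a nonzero submodule which is simple as a module (it has no invariant
subspaces other than `⊥` and itself). -/
def NSMod.IsSimpleSubmodule {c : ℂ} (S : NSMod c) (W : Submodule ℂ S.carrier) : Prop :=
  S.IsSubmodule W ∧ W ≠ ⊥ ∧
    ∀ W' : Submodule ℂ S.carrier, S.IsSubmodule W' → W' ≤ W → W' = ⊥ ∨ W' = W

/-- A homomorphism of Neveu–Schwarz modules: a linear map commuting with all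
the operators `L m` and `G k`. -/
structure NSHom {c c' : ℂ} (S : NSMod c) (T : NSMod c') where
  toFun : S.carrier →ₗ[ℂ] T.carrier
  commL : ∀ (m : ℤ) (v : S.carrier), toFun (S.L m v) = T.L m (toFun v)
  commG : ∀ (k : ℤ) (v : S.carrier), toFun (S.G k v) = T.G k (toFun v)

/-- Two Neveu–Schwarz modules are isomorphic if there is a bijective
homomorphism between them. -/
def NSIso {c c' : ℂ} (S : NSMod c) (T : NSMod c') : Prop :=
  ∃ f : NSHom S T, Function.Bijective f.toFun

/-- A realization of the intermediate series module `SA_{a,b}` inside a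
Neveu–Schwarz module `S` of central charge `0`: a basis `x j` (`j ∈ ℤ`, even)
and `y j` (`j ∈ ℤ`, representing `y_{j+1/2}`, odd) on which the operators act
by the defining formulas of `SA_{a,b}`. -/
structure SAFamily (a b : ℂ) (S : NSMod 0) where
  x : ℤ → S.carrier
  y : ℤ → S.carrier
  x_even : ∀ j : ℤ, x j ∈ S.even
  y_odd : ∀ j : ℤ, y j ∈ S.odd
  indep : LinearIndependent ℂ (Sum.elim x y)
  spans : Submodule.span ℂ (Set.range x ∪ Set.range y) = ⊤
  act_Lx : ∀ i j : ℤ, S.L i (x j) = (a + (j : ℂ) + (i : ℂ) * b) • x (i + j)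
  act_Ly : ∀ i j : ℤ,
    S.L i (y j) = (a + 1 / 2 + (j : ℂ) + (i : ℂ) * (b - 1 / 2)) • y (i + j)
  act_Gx : ∀ i j : ℤ, S.G i (x j) = y (i + j)
  act_Gy : ∀ i j : ℤ,
    S.G i (y j) = (a + 1 / 2 + (j : ℂ) + (2 * (i : ℂ) + 1) * (b - 1 / 2)) • x (i + j + 1)

/-- A realization of the intermediate series module `SA'_{a,b}` (for
`0 ≤ Re a < 1`, `b ≠ 1`) inside a Neveu–Schwarz module `S` of central
charge `0`.  For `(a,b) ≠ (1/2,1/2)` this is `SA_{a,b}` itself; for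
`(a,b) = (1/2,1/2)` it is the quotient `SA_{1/2,1/2}/ℂ·y_{-1/2}`, in which
the image of `y_{-1/2}` (here `y (-1)`) is zero and the remaining vectors
form a basis.  The action formulas hold verbatim in both cases. -/
structure SA'Family (a b : ℂ) (S : NSMod 0) where
  x : ℤ → S.carrier
  y : ℤ → S.carrier
  x_even : ∀ j : ℤ, x j ∈ S.even
  y_odd : ∀ j : ℤ, y j ∈ S.odd
  spans : Submodule.span ℂ (Set.range x ∪ Set.range y) = ⊤
  indep_special : a = 1 / 2 ∧ b = 1 / 2 →
    y (-1) = 0 ∧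
      LinearIndependent ℂ (Sum.elim x (fun j : {j : ℤ // j ≠ -1} => y j.1))
  indep_generic : ¬(a = 1 / 2 ∧ b = 1 / 2) → LinearIndependent ℂ (Sum.elim x y)
  act_Lx : ∀ i j : ℤ, S.L i (x j) = (a + (j : ℂ) + (i : ℂ) * b) • x (i + j)
  act_Ly : ∀ i j : ℤ,
    S.L i (y j) = (a + 1 / 2 + (j : ℂ) + (i : ℂ) * (b - 1 / 2)) • y (i + j)
  act_Gx : ∀ i j : ℤ, S.G i (x j) = y (i + j)
  act_Gy : ∀ i j : ℤ,
    S.G i (y j) = (a + 1 / 2 + (j : ℂ) + (2 * (i : ℂ) + 1) * (b - 1 / 2)) • x (i + j + 1)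

/-- `u` is a highest weight vector of weight `(c,h)` generating the
Neveu–Schwarz module `S` (of central charge `c`). -/
structure IsHW {c : ℂ} (h : ℂ) (S : NSMod c) (u : S.carrier) : Prop where
  ne_zero : u ≠ 0
  mem_even : u ∈ S.even
  hw0 : S.L 0 u = h • u
  hwL : ∀ n : ℤ, 1 ≤ n → S.L n u = 0
  hwG : ∀ k : ℤ, 0 ≤ k → S.G k u = 0
  gen : ∀ W : Submodule ℂ S.carrier, S.IsSubmodule W → u ∈ W → W = ⊤

/-- A realization of the tensor product Neveu–Schwarz module `V ⊗ S` (with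
`V` of central charge `c` and `S` of central charge `0`) as a Neveu–Schwarz
module `T` of central charge `c`, via the bilinear map `t`. -/
structure TensorWitness {c : ℂ} (V : NSMod c) (S : NSMod 0) (T : NSMod c) where
  t : V.carrier →ₗ[ℂ] S.carrier →ₗ[ℂ] T.carrier
  isTensor : IsTensorProduct t
  grade_ee : ∀ v ∈ V.even, ∀ w ∈ S.even, t v w ∈ T.even
  grade_oo : ∀ v ∈ V.odd, ∀ w ∈ S.odd, t v w ∈ T.even
  grade_eo : ∀ v ∈ V.even, ∀ w ∈ S.odd, t v w ∈ T.odd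
  grade_oe : ∀ v ∈ V.odd, ∀ w ∈ S.even, t v w ∈ T.odd
  actL : ∀ (m : ℤ) (v : V.carrier) (w : S.carrier),
    T.L m (t v w) = t (V.L m v) w + t v (S.L m w)
  actG_even : ∀ (k : ℤ), ∀ v ∈ V.even, ∀ w : S.carrier,
    T.G k (t v w) = t (V.G k v) w + t v (S.G k w)
  actG_odd : ∀ (k : ℤ), ∀ v ∈ V.odd, ∀ w : S.carrier,
    T.G k (t v w) = t (V.G k v) w - t v (S.G k w)

/-- The PBW monomial `L_{-n₁} ⋯ L_{-n_p} G_{-r₁} ⋯ G_{-r_q} u`, where the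
second list records each half-integer `r = k - 1/2` by the integer `k`
(so that `G_{-r}` is the operator `G (-k)`). -/
def vermaMonomial {c : ℂ} (M : NSMod c) (u : M.carrier) (p : List ℤ × List ℤ) :
    M.carrier :=
  (p.1.map fun n => M.L (-n)).foldr (fun f v => f v)
    ((p.2.map fun k => M.G (-k)).foldr (fun f v => f v) u)

/-- The index set for the PBW basis of a Verma module: weakly decreasing lists
of positive integers `n₁ ≥ ⋯ ≥ n_p ≥ 1`, together with strictly decreasing
lists of positive half-integers `r₁ > ⋯ > r_q > 0` (with `r = k - 1/2`
recorded by the integer `k ≥ 1`). -/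
def VermaIndex : Type :=
  {p : List ℤ × List ℤ //
    p.1.Chain' (· ≥ ·) ∧ (∀ n ∈ p.1, 1 ≤ n) ∧
      p.2.Chain' (· > ·) ∧ (∀ k ∈ p.2, 1 ≤ k)}

/-- `M` is the Verma module of highest weight `(c,h)` with highest weight
vector `u`: the PBW monomials in the negative-mode operators applied to `u`
form a basis of `M`. -/
def IsVerma {c : ℂ} (h : ℂ) (M : NSMod c) (u : M.carrier) : Prop :=
  IsHW h M u ∧
    LinearIndependent ℂ (fun p : VermaIndex => vermaMonomial M u p.1) ∧
    Submodule.span ℂ (Set.range fun p : VermaIndex => vermaMonomial M u p.1) = ⊤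

/-- The grading assumption on a highest weight module `V` of highest weight
`(c,h)`: `V = ⨁_{n ∈ ℕ} V_{h-n/2}` where `D n = V_{h-n/2}` is the
`L₀`-eigenspace with eigenvalue `h - n/2`, contained in the even part for
`n` even and the odd part for `n` odd, and `u ∈ D 0`. -/
structure GradedHW {c : ℂ} (h : ℂ) (V : NSMod c) (u : V.carrier)
    (D : ℕ → Submodule ℂ V.carrier) : Prop where
  hw : IsHW h V u
  u_mem : u ∈ D 0
  internal : DirectSum.IsInternal D
  eig : ∀ (n : ℕ), ∀ v ∈ D n, V.L 0 v = (h - (n : ℂ) / 2) • v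
  even_part : ∀ n : ℕ, Even n → D n ≤ V.even
  odd_part : ∀ n : ℕ, Odd n → D n ≤ V.odd

/-- A realization of the shifted module `V ⊗ ℂ[t^{±1/2}]` on the graded
vector space `Sh`.  Here `ι p v` represents `v ⊗ t^{p/2}` (half-integers
`s ∈ (1/2)ℤ` are recorded by integers `p` with `s = p/2`), and `D n` is the
weight space `V_{h - n/2}` (so `d = -n/2`).  The case distinction
`s + d ∈ ℤ` versus `s + d ∈ ℤ + 1/2` becomes `2 ∣ (p - n)` versus its
negation. -/
structure ShiftedWitness (a b : ℂ) {c : ℂ} (V : NSMod c)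
    (D : ℕ → Submodule ℂ V.carrier) (Sh : PreNSMod) where
  ι : ℤ → V.carrier →ₗ[ℂ] Sh.carrier
  directSum : Function.Bijective
    (Finsupp.lsum ℂ ι : (ℤ →₀ V.carrier) →ₗ[ℂ] Sh.carrier)
  grade_even : ∀ p : ℤ, (2 : ℤ) ∣ p → ∀ v : V.carrier, ι p v ∈ Sh.even
  grade_odd : ∀ p : ℤ, ¬(2 : ℤ) ∣ p → ∀ v : V.carrier, ι p v ∈ Sh.odd
  actL : ∀ (k p : ℤ) (n : ℕ), ∀ v ∈ D n,
    Sh.L k (ι p v) = ι (p + 2 * k) (V.L k v)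
      + (if (2 : ℤ) ∣ (p - (n : ℤ))
          then a + (p : ℂ) / 2 + (k : ℂ) * b + (n : ℂ) / 2
          else a + (p : ℂ) / 2 + (k : ℂ) * (b - 1 / 2) + (n : ℂ) / 2) •
            ι (p + 2 * k) v
  actG : ∀ (k p : ℤ) (n : ℕ), ∀ v ∈ D n,
    Sh.G k (ι p v) = ι (p + 2 * k + 1) (V.G k v)
      + ((-1 : ℂ) ^ n *
          (if (2 : ℤ) ∣ (p - (n : ℤ)) then 1
            else a + (p : ℂ) / 2 + (2 * (k : ℂ) + 1) * (b - 1 / 2) + (n : ℂ) / 2)) •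
            ι (p + 2 * k + 1) v

/-- A realization of the *reduced* shifted module: the quotient of the
shifted module `V ⊗ ℂ[t^{±1/2}]` by the copy of `V` spanned by the vectors
`v ⊗ t^{d - 1/2}` (`v ∈ V_{h+d}`) when `(a,b) = (1/2,1/2)`, and the shifted
module itself otherwise. -/
structure RedShiftedWitness (a b : ℂ) {c : ℂ} (V : NSMod c)
    (D : ℕ → Submodule ℂ V.carrier) (R : NSMod c) where
  ι : ℤ → V.carrier →ₗ[ℂ] R.carrier
  surj : Function.Surjective
    (Finsupp.lsum ℂ ι : (ℤ →₀ V.carrier) →ₗ[ℂ] R.carrier)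
  ker_special : a = 1 / 2 ∧ b = 1 / 2 →
    LinearMap.ker (Finsupp.lsum ℂ ι : (ℤ →₀ V.carrier) →ₗ[ℂ] R.carrier)
      = Submodule.span ℂ
          {w : ℤ →₀ V.carrier | ∃ n : ℕ, ∃ v ∈ D n, w = Finsupp.single (-(n : ℤ) - 1) v}
  ker_generic : ¬(a = 1 / 2 ∧ b = 1 / 2) →
    LinearMap.ker (Finsupp.lsum ℂ ι : (ℤ →₀ V.carrier) →ₗ[ℂ] R.carrier) = ⊥
  grade_even : ∀ p : ℤ, (2 : ℤ) ∣ p → ∀ v : V.carrier, ι p v ∈ R.even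
  grade_odd : ∀ p : ℤ, ¬(2 : ℤ) ∣ p → ∀ v : V.carrier, ι p v ∈ R.odd
  actL : ∀ (k p : ℤ) (n : ℕ), ∀ v ∈ D n,
    R.L k (ι p v) = ι (p + 2 * k) (V.L k v)
      + (if (2 : ℤ) ∣ (p - (n : ℤ))
          then a + (p : ℂ) / 2 + (k : ℂ) * b + (n : ℂ) / 2
          else a + (p : ℂ) / 2 + (k : ℂ) * (b - 1 / 2) + (n : ℂ) / 2) •
            ι (p + 2 * k) v
  actG : ∀ (k p : ℤ) (n : ℕ), ∀ v ∈ D n,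
    R.G k (ι p v) = ι (p + 2 * k + 1) (V.G k v)
      + ((-1 : ℂ) ^ n *
          (if (2 : ℤ) ∣ (p - (n : ℤ)) then 1
            else a + (p : ℂ) / 2 + (2 * (k : ℂ) + 1) * (b - 1 / 2) + (n : ℂ) / 2)) •
            ι (p + 2 * k + 1) v

/-- `φ` is a shifted character at level `s = p/2` on the Verma module `M`
with grading `D` and highest weight vector `u`:  `φ u = 1` and `φ` satisfies
the defining recursions on homogeneous vectors (`w ∈ D n` means
`L₀ w = (h + d) w` with `d = -n/2` and `w` of parity `n mod 2`; the operator
`G (-j)` is `G_{-r}` with `r = j - 1/2 > 0`). -/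
def IsShiftedChar (a b : ℂ) {c : ℂ} (M : NSMod c)
    (D : ℕ → Submodule ℂ M.carrier) (u : M.carrier) (p : ℤ)
    (φ : M.carrier →ₗ[ℂ] ℂ) : Prop :=
  φ u = 1 ∧
    (∀ (n : ℕ), ∀ w ∈ D n, ∀ k : ℤ, 1 ≤ k →
      φ (M.L (-k) w)
        = (if (2 : ℤ) ∣ (p - (n : ℤ))
            then -(a + (p : ℂ) / 2 + (k : ℂ) - (k : ℂ) * b + (n : ℂ) / 2)
            else -(a + (p : ℂ) / 2 + (k : ℂ) - (k : ℂ) * (b - 1 / 2) + (n : ℂ) / 2))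
          * φ w) ∧
    (∀ (n : ℕ), ∀ w ∈ D n, ∀ j : ℤ, 1 ≤ j →
      φ (M.G (-j) w)
        = (if (2 : ℤ) ∣ (p - (n : ℤ))
            then -(-1 : ℂ) ^ n *
              (a + (p : ℂ) / 2 + ((j : ℂ) - 1 / 2)
                - 2 * ((j : ℂ) - 1 / 2) * (b - 1 / 2) + (n : ℂ) / 2)
            else -(-1 : ℂ) ^ n)
          * φ w)

namespace SAFamily

variable {a b : ℂ} {S : NSMod 0} (F : SAFamily a b S)

/-- The basis of `SA_{a,b}` given by the vectors `x j`, `y j`. -/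
def toBasis : Module.Basis (ℤ ⊕ ℤ) ℂ S.carrier :=
  Module.Basis.mk F.indep (by rw [Set.Sum.elim_range, F.spans])

@[simp] lemma toBasis_inl (j : ℤ) : F.toBasis (Sum.inl j) = F.x j := by
  simp [toBasis, Module.Basis.mk_apply]

@[simp] lemma toBasis_inr (j : ℤ) : F.toBasis (Sum.inr j) = F.y j := by
  simp [toBasis, Module.Basis.mk_apply]

lemma x_ne_zero (j : ℤ) : F.x j ≠ 0 := by
  have := F.toBasis.ne_zero (Sum.inl j); simpa using this

lemma y_ne_zero (j : ℤ) : F.y j ≠ 0 := by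
  have := F.toBasis.ne_zero (Sum.inr j); simpa using this

lemma smul_x_cancel {j : ℤ} {α β : ℂ} (h : α • F.x j = β • F.x j) : α = β := by
  have h2 : (α - β) • F.x j = 0 := by rw [sub_smul, h, sub_self]
  rcases smul_eq_zero.mp h2 with h' | h'
  · exact sub_eq_zero.mp h'
  · exact absurd h' (F.x_ne_zero j)

lemma smul_y_cancel {j : ℤ} {α β : ℂ} (h : α • F.y j = β • F.y j) : α = β := by
  have h2 : (α - β) • F.y j = 0 := by rw [sub_smul, h, sub_self]
  rcases smul_eq_zero.mp h2 with h' | h'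
  · exact sub_eq_zero.mp h'
  · exact absurd h' (F.y_ne_zero j)

end SAFamily

/-- The weight function. -/
def saWt (a : ℂ) : ℤ ⊕ ℤ → ℂ := Sum.elim (fun j => a + j) (fun j => a + 1/2 + j)

lemma saWt_inj (a : ℂ) : Function.Injective (saWt a) := by
  rintro (j | j) (j' | j') h <;> simp only [saWt, Sum.elim_inl, Sum.elim_inr] at h
  · have : j = j' := by exact_mod_cast (by linear_combination h : (j:ℂ) = j')
    rw [this]
  · exfalso
    have h2 : ((2*j : ℤ) : ℂ) = ((2*j'+1 : ℤ) : ℂ) := by push_cast; linear_combination 2*h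
    have := Int.cast_injective (α := ℂ) h2
    omega
  · exfalso
    have h2 : ((2*j+1 : ℤ) : ℂ) = ((2*j' : ℤ) : ℂ) := by push_cast; linear_combination 2*h
    have := Int.cast_injective (α := ℂ) h2
    omega
  · have : j = j' := by exact_mod_cast (by linear_combination h : (j:ℂ) = j')
    rw [this]

namespace SAFamily

variable {a b : ℂ} {S : NSMod 0} (F : SAFamily a b S)

lemma L0_toBasis (e : ℤ ⊕ ℤ) : S.L 0 (F.toBasis e) = saWt a e • F.toBasis e := by
  rcases e with j | j
  · simp [F.act_Lx, saWt]
  · simp [F.act_Ly, saWt]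

lemma eigen (v : S.carrier) (hv : v ≠ 0) (t : ℂ) (ht : S.L 0 v = t • v) :
    ∃ e : ℤ ⊕ ℤ, t = saWt a e ∧ ∃ μ : ℂ, μ ≠ 0 ∧ v = μ • F.toBasis e := by
  set B := F.toBasis with hB
  have key : ∀ e, saWt a e * B.repr v e = t * B.repr v e := by
    intro e
    have h1 : (B.coord e).comp (S.L 0) = saWt a e • B.coord e := by
      apply B.ext
      intro e'
      simp only [hB, LinearMap.comp_apply, LinearMap.smul_apply, Module.Basis.coord_apply,
        F.L0_toBasis, map_smul, Module.Basis.repr_self, Finsupp.smul_apply, smul_eq_mul]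
      rcases eq_or_ne e' e with h | h
      · subst h; simp
      · simp [Finsupp.single_apply_eq_zero.mpr fun hc => absurd hc.symm h]
    have h2 := LinearMap.congr_fun h1 v
    simp only [LinearMap.comp_apply, LinearMap.smul_apply, Module.Basis.coord_apply, ht,
      map_smul, Finsupp.smul_apply, smul_eq_mul] at h2
    rw [h2]
  have hvr : B.repr v ≠ 0 := fun h0 => hv (by
    have := congrArg B.repr.symm h0
    simpa using this)
  obtain ⟨e0, he0⟩ : ∃ e0, B.repr v e0 ≠ 0 := by
    by_contra hall
    push_neg at hall
    exact hvr (Finsupp.ext fun e => hall e)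
  have hte0 : t = saWt a e0 := by
    have := key e0
    exact (mul_right_cancel₀ he0 this).symm
  refine ⟨e0, hte0, B.repr v e0, he0, ?_⟩
  have hsingle : B.repr v = Finsupp.single e0 (B.repr v e0) := by
    ext e
    rcases eq_or_ne e e0 with h | h
    · subst h; simp
    · rw [Finsupp.single_eq_of_ne h]
      by_contra hne
      have hk := key e
      rw [hte0] at hk
      have : saWt a e = saWt a e0 := by
        exact mul_right_cancel₀ hne hk
      exact h (saWt_inj a this)
  have := congrArg B.repr.symm hsingle
  simpa using this

end SAFamily

/-- Build an `NSIso` from a linear equivalence that intertwines the operators on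
a basis. -/
lemma nsiso_of_equiv {c1 c2 : ℂ} {S : NSMod c1} {T : NSMod c2}
    (g : S.carrier ≃ₗ[ℂ] T.carrier) (bS : Module.Basis (ℤ ⊕ ℤ) ℂ S.carrier)
    (hL : ∀ (m : ℤ) (e : ℤ ⊕ ℤ), g (S.L m (bS e)) = T.L m (g (bS e)))
    (hG : ∀ (k : ℤ) (e : ℤ ⊕ ℤ), g (S.G k (bS e)) = T.G k (g (bS e))) :
    NSIso S T := by
  refine ⟨⟨g.toLinearMap, fun m v => ?_, fun k v => ?_⟩, g.bijective⟩
  · have : g.toLinearMap.comp (S.L m) = (T.L m).comp g.toLinearMap :=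
      bS.ext fun e => by simpa using hL m e
    exact LinearMap.congr_fun this v
  · have : g.toLinearMap.comp (S.G k) = (T.G k).comp g.toLinearMap :=
      bS.ext fun e => by simpa using hG k e
    exact LinearMap.congr_fun this v

lemma nsiso_symm {c1 c2 : ℂ} {S : NSMod c1} {T : NSMod c2} (h : NSIso S T) :
    NSIso T S := by
  obtain ⟨f, hf⟩ := h
  let e := LinearEquiv.ofBijective f.toFun hf
  have he : ∀ v, e v = f.toFun v := fun v => rfl
  refine ⟨⟨e.symm.toLinearMap, fun m v => ?_, fun k v => ?_⟩, e.symm.bijective⟩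
  · apply e.injective
    rw [LinearEquiv.coe_coe, LinearEquiv.apply_symm_apply, he, f.commL]
    rw [show f.toFun (e.symm v) = e (e.symm v) from rfl, LinearEquiv.apply_symm_apply]
  · apply e.injective
    rw [LinearEquiv.coe_coe, LinearEquiv.apply_symm_apply, he, f.commG]
    rw [show f.toFun (e.symm v) = e (e.symm v) from rfl, LinearEquiv.apply_symm_apply]

/-- Case (i): `a - c ∈ ℤ`, `b = d` gives an isomorphism. -/
lemma sa_iso_case1 {a b c d : ℂ} {S : NSMod 0} (F : SAFamily a b S)
    {S' : NSMod 0} (F' : SAFamily c d S') (k : ℤ) (hk : a = c + k) (hbd : b = d) :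
    NSIso S S' := by
  let σ : (ℤ ⊕ ℤ) ≃ (ℤ ⊕ ℤ) := Equiv.sumCongr (Equiv.addRight k) (Equiv.addRight k)
  let bT : Module.Basis (ℤ ⊕ ℤ) ℂ S'.carrier := F'.toBasis.reindex σ.symm
  let g : S.carrier ≃ₗ[ℂ] S'.carrier := F.toBasis.equiv bT (Equiv.refl _)
  have hg : ∀ e : ℤ ⊕ ℤ, g (F.toBasis e) = F'.toBasis (σ e) := by
    intro e
    show F.toBasis.equiv bT (Equiv.refl _) (F.toBasis e) = _
    rw [Module.Basis.equiv_apply]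
    simp [bT, Module.Basis.reindex_apply]
  have hgx : ∀ j : ℤ, g (F.x j) = F'.x (j + k) := by
    intro j
    have := hg (Sum.inl j); simpa [σ] using this
  have hgy : ∀ j : ℤ, g (F.y j) = F'.y (j + k) := by
    intro j
    have := hg (Sum.inr j); simpa [σ] using this
  apply nsiso_of_equiv g F.toBasis
  · rintro m (j | j)
    · rw [F.toBasis_inl, F.act_Lx, map_smul, hgx, hgx, F'.act_Lx,
        show m + (j + k) = m + j + k by ring]
      congr 1
      push_cast
      rw [hk, hbd]; ring
    · rw [F.toBasis_inr, F.act_Ly, map_smul, hgy, hgy, F'.act_Ly,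
        show m + (j + k) = m + j + k by ring]
      congr 1
      push_cast
      rw [hk, hbd]; ring
  · rintro m (j | j)
    · rw [F.toBasis_inl, F.act_Gx, hgy, hgx, F'.act_Gx,
        show m + (j + k) = m + j + k by ring]
    · rw [F.toBasis_inr, F.act_Gy, map_smul, hgy, hgx, F'.act_Gy,
        show m + (j + k) + 1 = m + j + 1 + k by ring]
      congr 1
      push_cast
      rw [hk, hbd]; ring

/-- Case (ii): `a ∉ ℤ`, `a - c ∈ ℤ + 1/2`, `b = 1`, `d = 1/2` gives an isomorphism. -/
lemma sa_iso_case2 {a c : ℂ} {S : NSMod 0} (F : SAFamily a 1 S)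
    {S' : NSMod 0} (F' : SAFamily c (1/2) S') (k : ℤ) (hk : a = c + k + 1/2)
    (ha : ¬∃ n : ℤ, a = (n : ℂ)) :
    NSIso S S' := by
  have hne : ∀ j : ℤ, a + (j : ℂ) ≠ 0 := by
    intro j h
    exact ha ⟨-j, by push_cast; linear_combination h⟩
  let σ : (ℤ ⊕ ℤ) ≃ (ℤ ⊕ ℤ) :=
    { toFun := Sum.elim (fun j => Sum.inr (j + k)) (fun j => Sum.inl (j + k + 1))
      invFun := Sum.elim (fun j => Sum.inr (j - k - 1)) (fun j => Sum.inl (j - k))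
      left_inv := by rintro (j | j) <;> simp <;> ring
      right_inv := by rintro (j | j) <;> simp <;> ring }
  let u : (ℤ ⊕ ℤ) → ℂˣ :=
    Sum.elim (fun j => Units.mk0 ((a + (j : ℂ))⁻¹) (inv_ne_zero (hne j))) (fun _ => 1)
  let bT : Module.Basis (ℤ ⊕ ℤ) ℂ S'.carrier := (F'.toBasis.reindex σ.symm).unitsSMul u
  let g : S.carrier ≃ₗ[ℂ] S'.carrier := F.toBasis.equiv bT (Equiv.refl _)
  have hg : ∀ e : ℤ ⊕ ℤ, g (F.toBasis e) = (u e : ℂ) • F'.toBasis (σ e) := by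
    intro e
    show F.toBasis.equiv bT (Equiv.refl _) (F.toBasis e) = _
    rw [Module.Basis.equiv_apply]
    simp [bT, Module.Basis.unitsSMul_apply, Module.Basis.reindex_apply, Units.smul_def]
  have hgx : ∀ j : ℤ, g (F.x j) = (a + (j : ℂ))⁻¹ • F'.y (j + k) := by
    intro j
    have := hg (Sum.inl j); simpa [σ, u] using this
  have hgy : ∀ j : ℤ, g (F.y j) = F'.x (j + k + 1) := by
    intro j
    have := hg (Sum.inr j); simpa [σ, u] using this
  apply nsiso_of_equiv g F.toBasis
  · rintro m (j | j)
    · rw [F.toBasis_inl, F.act_Lx, map_smul, hgx, hgx, map_smul, F'.act_Ly,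
        show m + (j + k) = m + j + k by ring, smul_smul, smul_smul]
      congr 1
      have h1 := hne (m + j)
      have h2 := hne j
      push_cast at h1 h2 ⊢
      linear_combination mul_inv_cancel₀ h1 - mul_inv_cancel₀ h2 + (a+(j:ℂ))⁻¹ * hk
    · rw [F.toBasis_inr, F.act_Ly, map_smul, hgy, hgy, F'.act_Lx,
        show m + (j + k + 1) = m + j + k + 1 by ring]
      congr 1
      push_cast
      rw [hk]; ring
  · rintro m (j | j)
    · rw [F.toBasis_inl, F.act_Gx, hgy, hgx, map_smul, F'.act_Gy, smul_smul,
        show m + (j + k) + 1 = m + j + k + 1 by ring]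
      have h1 := hne j
      rw [show ((a + (j:ℂ))⁻¹ * (c + 1/2 + (((j:ℤ)+k : ℤ):ℂ) + (2*(m:ℂ)+1)*(1/2 - 1/2))) = 1 from by
        have h2 := hne j
        push_cast at h2 ⊢
        linear_combination mul_inv_cancel₀ h2 - (a+(j:ℂ))⁻¹ * hk, one_smul]
    · rw [F.toBasis_inr, F.act_Gy, map_smul, hgx, hgy, F'.act_Gx, smul_smul,
        show m + (j + k + 1) = m + j + 1 + k by ring]
      have h1 := hne (m + j + 1)
      rw [show ((a + 1/2 + (j:ℂ) + (2*(m:ℂ)+1)*(1 - 1/2)) * (a + ((m+j+1 : ℤ):ℂ))⁻¹) = 1 from by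
        push_cast at h1 ⊢
        linear_combination mul_inv_cancel₀ h1, one_smul]

lemma sa_iso_forward {a b c d : ℂ} {S : NSMod 0} (F : SAFamily a b S)
    {S' : NSMod 0} (F' : SAFamily c d S') (hiso : NSIso S S') :
    ((∃ k : ℤ, a - c = (k : ℂ)) ∧ b = d) ∨
      ((¬∃ k : ℤ, a = (k : ℂ)) ∧ (∃ k : ℤ, a - c = (k : ℂ) + 1 / 2) ∧
        b = 1 ∧ d = 1 / 2) ∨
      ((¬∃ k : ℤ, a = (k : ℂ) + 1 / 2) ∧ (∃ k : ℤ, a - c = (k : ℂ) + 1 / 2) ∧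
        b = 1 / 2 ∧ d = 1) := by
  obtain ⟨f, hf⟩ := hiso
  have hinj := hf.injective
  have hxne : ∀ j : ℤ, f.toFun (F.x j) ≠ 0 := by
    intro j h
    exact F.x_ne_zero j (hinj (by rw [h, map_zero]))
  have hyne : ∀ j : ℤ, f.toFun (F.y j) ≠ 0 := by
    intro j h
    exact F.y_ne_zero j (hinj (by rw [h, map_zero]))
  have hLx0 : ∀ j : ℤ, S'.L 0 (f.toFun (F.x j)) = (a + (j : ℂ)) • f.toFun (F.x j) := by
    intro j
    have h := (f.commL 0 (F.x j)).symm
    rw [F.act_Lx, map_smul, show (0:ℤ) + j = j by ring] at h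
    push_cast at h
    simpa using h
  have hLy0 : ∀ j : ℤ, S'.L 0 (f.toFun (F.y j)) = (a + 1/2 + (j : ℂ)) • f.toFun (F.y j) := by
    intro j
    have h := (f.commL 0 (F.y j)).symm
    rw [F.act_Ly, map_smul, show (0:ℤ) + j = j by ring] at h
    push_cast at h
    simpa using h
  obtain ⟨e0, he0, -⟩ := F'.eigen (f.toFun (F.x 0)) (hxne 0) a (by
    have := hLx0 0; push_cast at this; simpa using this)
  rcases e0 with m | m
  · -- Case A : a = c + m
    left
    simp only [saWt, Sum.elim_inl] at he0
    -- f (x j) = lam j • x' (m+j), f (y j) = mu j • y' (m+j)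
    have hX : ∀ j : ℤ, ∃ μ : ℂ, μ ≠ 0 ∧ f.toFun (F.x j) = μ • F'.x (m + j) := by
      intro j
      obtain ⟨e, he, μ, hμ, hv⟩ := F'.eigen _ (hxne j) (a + (j : ℂ)) (hLx0 j)
      have heq : e = Sum.inl (m + j) := by
        apply saWt_inj c
        rw [← he]
        simp only [saWt, Sum.elim_inl]
        push_cast
        rw [he0]; ring
      rw [heq, F'.toBasis_inl] at hv
      exact ⟨μ, hμ, hv⟩
    have hY : ∀ j : ℤ, ∃ μ : ℂ, μ ≠ 0 ∧ f.toFun (F.y j) = μ • F'.y (m + j) := by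
      intro j
      obtain ⟨e, he, μ, hμ, hv⟩ := F'.eigen _ (hyne j) (a + 1/2 + (j : ℂ)) (hLy0 j)
      have heq : e = Sum.inr (m + j) := by
        apply saWt_inj c
        rw [← he]
        simp only [saWt, Sum.elim_inr]
        push_cast
        rw [he0]; ring
      rw [heq, F'.toBasis_inr] at hv
      exact ⟨μ, hμ, hv⟩
    choose lam hlam0 hlam using hX
    choose mu hmu0 hmu using hY
    have hml : ∀ i j : ℤ, mu (i + j) = lam j := by
      intro i j
      have h := f.commG i (F.x j)
      rw [F.act_Gx, hmu (i + j), hlam j, map_smul, F'.act_Gx,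
        show i + (m + j) = m + (i + j) by ring] at h
      exact F'.smul_y_cancel h
    have hlam10 : lam 1 = lam 0 := by
      have h1 := hml 1 0
      have h2 := hml 0 1
      rw [show (1:ℤ) + 0 = 1 by norm_num] at h1
      rw [show (0:ℤ) + 1 = 1 by norm_num] at h2
      rw [← h2, h1]
    have hE : (a + 1 * b) * lam 0 = (c + (m : ℂ) + 1 * d) * lam 0 := by
      have h := f.commL 1 (F.x 0)
      rw [F.act_Lx, map_smul, hlam (1 + 0), hlam 0, map_smul, F'.act_Lx,
        show (1:ℤ) + (m + 0) = m + (1 + 0) by ring, smul_smul, smul_smul] at h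
      have hsc := F'.smul_x_cancel h
      rw [show (1:ℤ) + 0 = 1 by norm_num, hlam10] at hsc
      push_cast at hsc
      linear_combination hsc
    have hbd : b = d := by
      have h := mul_right_cancel₀ (hlam0 0) hE
      linear_combination h - he0
    exact ⟨⟨m, by rw [he0]; ring⟩, hbd⟩
  · -- Case B : a = c + 1/2 + m
    simp only [saWt, Sum.elim_inr] at he0
    have hX : ∀ j : ℤ, ∃ μ : ℂ, μ ≠ 0 ∧ f.toFun (F.x j) = μ • F'.y (m + j) := by
      intro j
      obtain ⟨e, he, μ, hμ, hv⟩ := F'.eigen _ (hxne j) (a + (j : ℂ)) (hLx0 j)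
      have heq : e = Sum.inr (m + j) := by
        apply saWt_inj c
        rw [← he]
        simp only [saWt, Sum.elim_inr]
        push_cast
        rw [he0]; ring
      rw [heq, F'.toBasis_inr] at hv
      exact ⟨μ, hμ, hv⟩
    have hY : ∀ j : ℤ, ∃ μ : ℂ, μ ≠ 0 ∧ f.toFun (F.y j) = μ • F'.x (m + j + 1) := by
      intro j
      obtain ⟨e, he, μ, hμ, hv⟩ := F'.eigen _ (hyne j) (a + 1/2 + (j : ℂ)) (hLy0 j)
      have heq : e = Sum.inl (m + j + 1) := by
        apply saWt_inj c
        rw [← he]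
        simp only [saWt, Sum.elim_inl]
        push_cast
        rw [he0]; ring
      rw [heq, F'.toBasis_inl] at hv
      exact ⟨μ, hμ, hv⟩
    choose lam hlam0 hlam using hX
    choose mu hmu0 hmu using hY
    -- E1 : L-relation on x
    have E1 : ∀ i j : ℤ, (a + (j:ℂ) + (i:ℂ) * b) * lam (i + j)
        = lam j * (c + 1/2 + (m:ℂ) + (j:ℂ) + (i:ℂ) * (d - 1/2)) := by
      intro i j
      have h := f.commL i (F.x j)
      rw [F.act_Lx, map_smul, hlam (i + j), hlam j, map_smul, F'.act_Ly,
        show i + (m + j) = m + (i + j) by ring, smul_smul, smul_smul] at h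
      have hsc := F'.smul_y_cancel h
      push_cast at hsc
      linear_combination hsc
    -- E2 : G-relation on x
    have E2 : ∀ i j : ℤ, mu (i + j)
        = lam j * (c + 1/2 + (m:ℂ) + (j:ℂ) + (2 * (i:ℂ) + 1) * (d - 1/2)) := by
      intro i j
      have h := f.commG i (F.x j)
      rw [F.act_Gx, hmu (i + j), hlam j, map_smul, F'.act_Gy, smul_smul,
        show i + (m + j) + 1 = m + (i + j) + 1 by ring] at h
      have hsc := F'.smul_x_cancel h
      push_cast at hsc
      linear_combination hsc
    by_cases hd : d = 1/2
    · -- subcase d = 1/2 : conclude case (ii)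
      right; left
      have hΛ : ∀ j : ℤ, lam j * (c + 1/2 + (m:ℂ) + (j:ℂ)) = mu 0 := by
        intro j
        have h := E2 (-j) j
        rw [show -j + j = (0:ℤ) by ring] at h
        push_cast at h
        linear_combination -h - lam j * (2 * (-(j:ℂ)) + 1) * hd
      have hanotZ : ¬∃ n : ℤ, a = (n : ℂ) := by
        rintro ⟨n, hn⟩
        apply hmu0 0
        rw [← hΛ (-n)]
        apply mul_eq_zero_of_right
        push_cast
        linear_combination hn - he0
      have hb1 : b = 1 := by
        have h1 := E1 1 0
        rw [show (1:ℤ) + 0 = 1 by norm_num] at h1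
        push_cast at h1
        have hΛ0 := hΛ 0
        have hΛ1 := hΛ 1
        push_cast at hΛ0 hΛ1
        have key : (a + b) * lam 1 = (a + 1) * lam 1 := by
          linear_combination h1 + lam 0 * hd + hΛ0 - hΛ1 - lam 1 * he0
        have h2 := mul_right_cancel₀ (hlam0 1) key
        linear_combination h2
      exact ⟨hanotZ, ⟨m, by rw [he0]; ring⟩, hb1, hd⟩
    · -- subcase d ≠ 1/2 : conclude case (iii)
      right; right
      have he' : d - 1/2 ≠ 0 := sub_ne_zero.mpr hd
      -- lam 1 = lam 0
      have A0 := E2 0 1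
      have A0' := E2 1 0
      rw [show (0:ℤ) + 1 = 1 + 0 by norm_num] at A0
      have A1 := E2 1 1
      have A1' := E2 2 0
      rw [show (1:ℤ) + 1 = 2 + 0 by norm_num] at A1
      push_cast at A0 A0' A1 A1'
      have hstep : lam 1 * (2 * (d - 1/2)) = lam 0 * (2 * (d - 1/2)) := by
        linear_combination (A0 - A0') - (A1 - A1')
      have hlam10 : lam 1 = lam 0 :=
        mul_right_cancel₀ (mul_ne_zero two_ne_zero he') hstep
      -- b = d - 1/2
      have hbd : b = d - 1/2 := by
        have h1 := E1 1 0
        rw [show (1:ℤ) + 0 = 1 by norm_num, hlam10] at h1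
        push_cast at h1
        have key : (a + b) * lam 0 = (a + (d - 1/2)) * lam 0 := by
          linear_combination h1 - lam 0 * he0
        have h2 := mul_right_cancel₀ (hlam0 0) key
        linear_combination h2
      -- d = 1
      have hd1 : d = 1 := by
        have B0 := E2 0 0
        have B1 := E2 (-1) 1
        rw [show (-1:ℤ) + 1 = 0 + 0 by norm_num, hlam10] at B1
        push_cast at B0 B1
        have key : (c + 1/2 + (m:ℂ) + (d - 1/2)) * lam 0
            = (c + 1/2 + (m:ℂ) + 1 - (d - 1/2)) * lam 0 := by
          linear_combination B1 - B0
        have h2 := mul_right_cancel₀ (hlam0 0) key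
        linear_combination h2 / 2
      have hb' : b = 1/2 := by rw [hbd, hd1]; norm_num
      have hanotZ2 : ¬∃ n : ℤ, a = (n : ℂ) + 1/2 := by
        rintro ⟨n, hn⟩
        apply hmu0 ((-n - 1) + 0)
        rw [E2 (-n - 1) 0]
        apply mul_eq_zero_of_right
        push_cast
        rw [hd1]
        linear_combination hn - he0
      exact ⟨hanotZ2, ⟨m, by rw [he0]; ring⟩, hb', hd1⟩
/-- Theorem 0.1(1): `SA_{a,b} ≅ SA_{c,d}` if and only if
(i) `a - c ∈ ℤ` and `b = d`; or (ii) `a ∉ ℤ`, `a - c ∈ ℤ + 1/2`, `b = 1`,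
`d = 1/2`; or (iii) `a ∉ ℤ + 1/2`, `a - c ∈ ℤ + 1/2`, `b = 1/2`, `d = 1`. -/
theorem SA_iso_iff (a b c d : ℂ) (S : NSMod 0) (F : SAFamily a b S)
    (S' : NSMod 0) (F' : SAFamily c d S') :
    NSIso S S' ↔
      ((∃ k : ℤ, a - c = (k : ℂ)) ∧ b = d) ∨
      ((¬∃ k : ℤ, a = (k : ℂ)) ∧ (∃ k : ℤ, a - c = (k : ℂ) + 1 / 2) ∧
        b = 1 ∧ d = 1 / 2) ∨
      ((¬∃ k : ℤ, a = (k : ℂ) + 1 / 2) ∧ (∃ k : ℤ, a - c = (k : ℂ) + 1 / 2) ∧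
        b = 1 / 2 ∧ d = 1) := by
  constructor
  · exact fun h => sa_iso_forward F F' h
  · rintro (⟨⟨k, hk⟩, hbd⟩ | ⟨ha, ⟨k, hk⟩, hb, hd⟩ | ⟨ha, ⟨k, hk⟩, hb, hd⟩)
    · exact sa_iso_case1 F F' k (by linear_combination hk) hbd
    · subst hb; subst hd
      exact sa_iso_case2 F F' k (by linear_combination hk) ha
    · subst hb; subst hd
      apply nsiso_symm
      refine sa_iso_case2 F' F (-(k + 1)) ?_ ?_
      · push_cast
        linear_combination -hk
      · rintro ⟨n, hn⟩
        exact ha ⟨n + k, by push_cast; linear_combination hn + hk⟩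
end
end

section
/- For every a ∈ ℤ one has SA_{a,1} ≅ SA_{0,1} as Neveu–Schwarz modules. Moreover, the subspace SA'_{0,1} of SA_{0,1} spanned by {x_j : j ∈ ℤ, j ≠ 0} ∪ {y_{j+1/2} : j ∈ ℤ} is a submodule of SA_{0,1}, it is simple, and it is the unique simple submodule of SA_{0,1}. -/
noncomputable section

open Submodule

/-- Extraction of eigencomponents: if a submodule `W` is invariant under `T` and
contains a finite linear combination of eigenvectors with pairwise distinct
eigenvalues, then it contains each summand. -/
lemma extract_eigencomponent {M : Type*} [AddCommGroup M] [Module ℂ M]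
    (T : M →ₗ[ℂ] M) (W : Submodule ℂ M) (hW : ∀ v ∈ W, T v ∈ W)
    {ι : Type*} (e : ι → M) (lam : ι → ℂ)
    (he : ∀ i, T (e i) = lam i • e i) (hlam : Function.Injective lam)
    (s : Finset ι) :
    ∀ c : ι → ℂ, (∑ i ∈ s, c i • e i) ∈ W → ∀ i ∈ s, c i • e i ∈ W := by
  classical
  induction s using Finset.induction_on with
  | empty => simp
  | @insert i₁ t hi₁ ih =>
    intro c hv i hi
    set v : M := ∑ j ∈ insert i₁ t, c j • e j with hvdef
    have hTv : T v ∈ W := hW _ hv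
    have hsub : T v - lam i₁ • v ∈ W := W.sub_mem hTv (W.smul_mem _ hv)
    have hrw : T v - lam i₁ • v = ∑ j ∈ t, ((lam j - lam i₁) * c j) • e j := by
      rw [hvdef, map_sum, Finset.smul_sum]
      rw [← Finset.sum_sub_distrib]
      rw [Finset.sum_insert hi₁]
      have h1 : ∀ j, T (c j • e j) - lam i₁ • (c j • e j)
          = ((lam j - lam i₁) * c j) • e j := by
        intro j
        rw [map_smul, he j, smul_smul, smul_smul, ← sub_smul]
        ring_nf
      simp only [h1]
      simp
    have hIH : ∀ j ∈ t, ((lam j - lam i₁) * c j) • e j ∈ W := by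
      apply ih
      rw [← hrw]; exact hsub
    have hmem_t : ∀ j ∈ t, c j • e j ∈ W := by
      intro j hj
      have hne : lam j - lam i₁ ≠ 0 := by
        intro h
        exact hi₁ (hlam (sub_eq_zero.mp h) ▸ hj)
      have := W.smul_mem (lam j - lam i₁)⁻¹ (hIH j hj)
      rwa [smul_smul, ← mul_assoc, inv_mul_cancel₀ hne, one_mul] at this
    rcases Finset.mem_insert.1 hi with rfl | hi
    · have : c i • e i = v - ∑ j ∈ t, c j • e j := by
        rw [hvdef, Finset.sum_insert hi₁]; abel
      rw [this]
      exact W.sub_mem hv (W.sum_mem hmem_t)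
    · exact hmem_t i hi

/-- If an invariant subspace contains a nonzero vector, it contains some basis
vector, provided the basis consists of eigenvectors with distinct eigenvalues. -/
lemma exists_basis_mem {M : Type*} [AddCommGroup M] [Module ℂ M]
    (T : M →ₗ[ℂ] M) (W : Submodule ℂ M) (hW : ∀ v ∈ W, T v ∈ W)
    {ι : Type*} (b : Module.Basis ι ℂ M) (lam : ι → ℂ)
    (he : ∀ i, T (b i) = lam i • b i) (hlam : Function.Injective lam)
    {v : M} (hv : v ∈ W) (hv0 : v ≠ 0) : ∃ i, b i ∈ W := by
  classical
  have hrepr : (∑ i ∈ (b.repr v).support, (b.repr v) i • b i) = v := by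
    conv_rhs => rw [← b.linearCombination_repr v]
    rw [Finsupp.linearCombination_apply, Finsupp.sum]
  have hsupp : (b.repr v).support.Nonempty := by
    rw [Finsupp.support_nonempty_iff]
    simpa using hv0
  obtain ⟨i, hi⟩ := hsupp
  refine ⟨i, ?_⟩
  have hmem := extract_eigencomponent T W hW b lam he hlam _ _ (hrepr ▸ hv) i hi
  have hne : (b.repr v) i ≠ 0 := Finsupp.mem_support_iff.1 hi
  have := W.smul_mem ((b.repr v) i)⁻¹ hmem
  rwa [smul_smul, inv_mul_cancel₀ hne, one_smul] at this

/-- Theorem 0.1(2), first part: for `a ∈ ℤ` one has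
`SA_{a,1} ≅ SA_{0,1}`; moreover the subspace `SA'_{0,1}` of `SA_{0,1}`
spanned by `{x_j : j ≠ 0} ∪ {y_{j+1/2} : j ∈ ℤ}` is a simple submodule, and
it is the unique simple submodule of `SA_{0,1}`. -/
theorem SA_int_iso_and_unique_simple_submodule (a : ℤ)
    (S : NSMod 0) (F : SAFamily (a : ℂ) 1 S)
    (S₀ : NSMod 0) (F₀ : SAFamily 0 1 S₀) :
    NSIso S S₀ ∧
      S₀.IsSimpleSubmodule
        (Submodule.span ℂ (F₀.x '' {j : ℤ | j ≠ 0} ∪ Set.range F₀.y)) ∧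
      (∀ W : Submodule ℂ S₀.carrier, S₀.IsSimpleSubmodule W →
        W = Submodule.span ℂ (F₀.x '' {j : ℤ | j ≠ 0} ∪ Set.range F₀.y)) := by
  classical
  -- bases
  have hBsp : ⊤ ≤ span ℂ (Set.range (Sum.elim F.x F.y)) := by
    rw [Set.Sum.elim_range, F.spans]
  have hB₀sp : ⊤ ≤ span ℂ (Set.range (Sum.elim F₀.x F₀.y)) := by
    rw [Set.Sum.elim_range, F₀.spans]
  let B : Module.Basis (ℤ ⊕ ℤ) ℂ S.carrier := Module.Basis.mk F.indep hBsp
  let B₀ : Module.Basis (ℤ ⊕ ℤ) ℂ S₀.carrier := Module.Basis.mk F₀.indep hB₀sp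
  have hBx : ∀ j : ℤ, B (Sum.inl j) = F.x j := fun j => by simp [B]
  have hBy : ∀ j : ℤ, B (Sum.inr j) = F.y j := fun j => by simp [B]
  have hB₀x : ∀ j : ℤ, B₀ (Sum.inl j) = F₀.x j := fun j => by simp [B₀]
  have hB₀y : ∀ j : ℤ, B₀ (Sum.inr j) = F₀.y j := fun j => by simp [B₀]
  -- the isomorphism
  let eIdx : (ℤ ⊕ ℤ) ≃ (ℤ ⊕ ℤ) := Equiv.sumCongr (Equiv.addRight a) (Equiv.addRight a)
  let φ : S.carrier ≃ₗ[ℂ] S₀.carrier := B.equiv B₀ eIdx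
  have hφx : ∀ j : ℤ, φ (F.x j) = F₀.x (j + a) := by
    intro j
    rw [← hBx j, ← hB₀x (j + a)]
    have : eIdx (Sum.inl j) = Sum.inl (j + a) := rfl
    rw [show φ (B (Sum.inl j)) = B₀ (eIdx (Sum.inl j)) from B.equiv_apply _ B₀ eIdx, this]
  have hφy : ∀ j : ℤ, φ (F.y j) = F₀.y (j + a) := by
    intro j
    rw [← hBy j, ← hB₀y (j + a)]
    have : eIdx (Sum.inr j) = Sum.inr (j + a) := rfl
    rw [show φ (B (Sum.inr j)) = B₀ (eIdx (Sum.inr j)) from B.equiv_apply _ B₀ eIdx, this]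
  have hcommL : ∀ (m : ℤ) (v : S.carrier), φ (S.L m v) = S₀.L m (φ v) := by
    intro m
    have h : (φ.toLinearMap ∘ₗ S.L m) = (S₀.L m ∘ₗ φ.toLinearMap) := by
      apply B.ext
      rintro (j | j)
      · simp only [LinearMap.comp_apply, LinearEquiv.coe_coe, hBx]
        rw [F.act_Lx, map_smul, hφx, hφx, F₀.act_Lx]
        rw [show m + (j + a) = m + j + a from by ring]
        congr 1
        push_cast; ring
      · simp only [LinearMap.comp_apply, LinearEquiv.coe_coe, hBy]
        rw [F.act_Ly, map_smul, hφy, hφy, F₀.act_Ly]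
        rw [show m + (j + a) = m + j + a from by ring]
        congr 1
        push_cast; ring
    intro v
    simpa using DFunLike.congr_fun h v
  have hcommG : ∀ (m : ℤ) (v : S.carrier), φ (S.G m v) = S₀.G m (φ v) := by
    intro m
    have h : (φ.toLinearMap ∘ₗ S.G m) = (S₀.G m ∘ₗ φ.toLinearMap) := by
      apply B.ext
      rintro (j | j)
      · simp only [LinearMap.comp_apply, LinearEquiv.coe_coe, hBx]
        rw [F.act_Gx, hφy, hφx, F₀.act_Gx]
        rw [show m + (j + a) = m + j + a from by ring]
      · simp only [LinearMap.comp_apply, LinearEquiv.coe_coe, hBy]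
        rw [F.act_Gy, map_smul, hφx, hφy, F₀.act_Gy]
        rw [show m + (j + a) + 1 = m + j + 1 + a from by ring]
        congr 1
        push_cast; ring
    intro v
    simpa using DFunLike.congr_fun h v
  have hiso : NSIso S S₀ := ⟨⟨φ.toLinearMap, hcommL, hcommG⟩, φ.bijective⟩
  -- the submodule W
  set Wspan : Submodule ℂ S₀.carrier :=
    Submodule.span ℂ (F₀.x '' {j : ℤ | j ≠ 0} ∪ Set.range F₀.y) with hWdef
  have hxW : ∀ j : ℤ, j ≠ 0 → F₀.x j ∈ Wspan := fun j hj =>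
    subset_span (Or.inl ⟨j, hj, rfl⟩)
  have hyW : ∀ j : ℤ, F₀.y j ∈ Wspan := fun j =>
    subset_span (Or.inr ⟨j, rfl⟩)
  -- invariance of W
  have hWL : ∀ m : ℤ, ∀ v ∈ Wspan, S₀.L m v ∈ Wspan := by
    intro m v hv
    induction hv using Submodule.span_induction with
    | mem w hw =>
      rcases hw with ⟨j, hj, rfl⟩ | ⟨j, rfl⟩
      · rw [F₀.act_Lx]
        by_cases h : m + j = 0
        · have h' : ((m + j : ℤ) : ℂ) = 0 := by rw [h]; norm_num
          push_cast at h'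
          have hc : (0 + (j : ℂ) + (m : ℂ) * 1) = 0 := by linear_combination h'
          rw [hc, zero_smul]; exact zero_mem _
        · exact Submodule.smul_mem _ _ (hxW _ h)
      · rw [F₀.act_Ly]; exact Submodule.smul_mem _ _ (hyW _)
    | zero => rw [map_zero]; exact zero_mem _
    | add x y hx hy ihx ihy => rw [map_add]; exact add_mem ihx ihy
    | smul c x hx ihx => rw [map_smul]; exact Submodule.smul_mem _ _ ihx
  have hWG : ∀ k : ℤ, ∀ v ∈ Wspan, S₀.G k v ∈ Wspan := by
    intro m v hv
    induction hv using Submodule.span_induction with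
    | mem w hw =>
      rcases hw with ⟨j, hj, rfl⟩ | ⟨j, rfl⟩
      · rw [F₀.act_Gx]; exact hyW _
      · rw [F₀.act_Gy]
        by_cases h : m + j + 1 = 0
        · have h' : ((m + j + 1 : ℤ) : ℂ) = 0 := by rw [h]; norm_num
          push_cast at h'
          have hc : (0 + 1 / 2 + (j : ℂ) + (2 * (m : ℂ) + 1) * (1 - 1 / 2)) = 0 := by
            linear_combination h'
          rw [hc, zero_smul]; exact zero_mem _
        · exact Submodule.smul_mem _ _ (hxW _ h)
    | zero => rw [map_zero]; exact zero_mem _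
    | add x y hx hy ihx ihy => rw [map_add]; exact add_mem ihx ihy
    | smul c x hx ihx => rw [map_smul]; exact Submodule.smul_mem _ _ ihx
  have hWsub : S₀.IsSubmodule Wspan := ⟨hWL, hWG⟩
  -- W ≠ ⊥
  have hy0 : F₀.y 0 ≠ 0 := by simpa using F₀.indep.ne_zero (Sum.inr 0)
  have hWne : Wspan ≠ ⊥ := by
    intro h
    have := hyW 0
    rw [h, Submodule.mem_bot] at this
    exact hy0 this
  -- every nonzero invariant subspace contains W
  have hmain : ∀ W' : Submodule ℂ S₀.carrier,
      S₀.IsSubmodule W' → W' ≠ ⊥ → Wspan ≤ W' := by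
    intro W' hW' hne
    obtain ⟨v, hvW, hv0⟩ := (Submodule.ne_bot_iff W').1 hne
    set lam : ℤ ⊕ ℤ → ℂ := Sum.elim (fun j => (j : ℂ)) (fun j => (j : ℂ) + 1 / 2)
      with hlamdef
    have heig : ∀ i, S₀.L 0 (B₀ i) = lam i • B₀ i := by
      rintro (j | j)
      · rw [hB₀x, F₀.act_Lx, show (0 : ℤ) + j = j from zero_add j]
        congr 1
        simp only [hlamdef, Sum.elim_inl]
        push_cast; ring
      · rw [hB₀y, F₀.act_Ly, show (0 : ℤ) + j = j from zero_add j]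
        congr 1
        simp only [hlamdef, Sum.elim_inr]
        push_cast; ring
    have hlaminj : Function.Injective lam := by
      rintro (j | j) (k | k) h <;> simp [hlamdef] at h
      · exact congrArg Sum.inl (by exact_mod_cast h)
      · exfalso
        have h2 : ((2 * j : ℤ) : ℂ) = ((2 * k + 1 : ℤ) : ℂ) := by
          push_cast; linear_combination 2 * h
        have := Int.cast_injective h2
        omega
      · exfalso
        have h2 : ((2 * j + 1 : ℤ) : ℂ) = ((2 * k : ℤ) : ℂ) := by
          push_cast; linear_combination 2 * h
        have := Int.cast_injective h2
        omega
      · exact congrArg Sum.inr (by exact_mod_cast h)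
    obtain ⟨i, hiW⟩ :=
      exists_basis_mem (S₀.L 0) W' (hW'.1 0) B₀ lam heig hlaminj hvW hv0
    have hxy : ∀ j : ℤ, F₀.x j ∈ W' → ∀ k : ℤ, F₀.y k ∈ W' := by
      intro j hj k
      have := hW'.2 (k - j) _ hj
      rwa [F₀.act_Gx, sub_add_cancel] at this
    have hyx : ∀ j : ℤ, F₀.y j ∈ W' → ∀ m : ℤ, m ≠ 0 → F₀.x m ∈ W' := by
      intro j hj m hm
      have h1 := hW'.2 (m - j - 1) _ hj
      rw [F₀.act_Gy, show m - j - 1 + j + 1 = m from by ring] at h1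
      have hc : (0 + 1 / 2 + (j : ℂ) + (2 * ((m - j - 1 : ℤ) : ℂ) + 1) * (1 - 1 / 2))
          = (m : ℂ) := by push_cast; ring
      rw [hc] at h1
      have hm' : (m : ℂ) ≠ 0 := Int.cast_ne_zero.2 hm
      have h2 := W'.smul_mem (m : ℂ)⁻¹ h1
      rwa [smul_smul, inv_mul_cancel₀ hm', one_smul] at h2
    have hboth : (∀ k, F₀.y k ∈ W') ∧ (∀ m : ℤ, m ≠ 0 → F₀.x m ∈ W') := by
      rcases i with j | j
      · rw [hB₀x] at hiW
        have hy := hxy j hiW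
        exact ⟨hy, hyx 0 (hy 0)⟩
      · rw [hB₀y] at hiW
        have hx := hyx j hiW
        exact ⟨hxy 1 (hx 1 one_ne_zero), hx⟩
    rw [hWdef]
    refine Submodule.span_le.2 ?_
    rintro w (⟨j, hj, rfl⟩ | ⟨j, rfl⟩)
    · exact hboth.2 j hj
    · exact hboth.1 j
  refine ⟨hiso, ⟨hWsub, hWne, ?_⟩, ?_⟩
  · intro W' hW' hle
    by_cases h : W' = ⊥
    · exact Or.inl h
    · exact Or.inr (le_antisymm hle (hmain W' hW' h))
  · rintro W'' ⟨hsub, hne, hmin⟩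
    rcases hmin Wspan hWsub (hmain W'' hsub hne) with h | h
    · exact absurd h hWne
    · exact h.symm
end
end

section
/- For every a ∈ Z one has SA_{a,1/2} ≅ SA_{1/2,1/2} as Neveu–Schwarz modules. Moreover, in SA_{1/2,1/2} the vector y_{−1/2} is annihilated by all the operators L_i and G_{i+1/2} (i ∈ ℤ), so the line ℂ·y_{−1/2} is a submodule of SA_{1/2,1/2}, and the quotient module SA'_{1/2,1/2} = SA_{1/2,1/2}/ℂ·y_{−1/2} is simple. -/
noncomputable section

open Submodule

lemma eigen_component {M : Type*} [AddCommGroup M] [Module ℂ M] {ι : Type*}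
    (B : ι → M) (lam : ι → ℂ) (hlam : Function.Injective lam)
    (T : M →ₗ[ℂ] M) (hT : ∀ i, T (B i) = lam i • B i)
    (W : Submodule ℂ M) (hW : ∀ v ∈ W, T v ∈ W) :
    ∀ s : Finset ι, ∀ c : ι → ℂ, (∑ i ∈ s, c i • B i) ∈ W →
      ∀ i ∈ s, c i • B i ∈ W := by
  classical
  intro s
  induction s using Finset.induction_on with
  | empty => intro c _ i hi; simp at hi
  | @insert a s ha ih =>
    intro c hv i hi
    have hTv : T (∑ j ∈ insert a s, c j • B j) - lam a • (∑ j ∈ insert a s, c j • B j)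
        = ∑ j ∈ s, ((lam j - lam a) * c j) • B j := by
      rw [map_sum, Finset.smul_sum, ← Finset.sum_sub_distrib]
      have hterm : ∀ j, T (c j • B j) - lam a • (c j • B j)
          = ((lam j - lam a) * c j) • B j := by
        intro j
        rw [map_smul, hT, smul_smul, smul_smul, ← sub_smul]
        congr 1; ring
      rw [Finset.sum_congr rfl (fun j _ => hterm j), Finset.sum_insert ha]
      simp
    have hmem : ∀ j ∈ s, c j • B j ∈ W := by
      intro j hj
      have h1 := ih (fun j => (lam j - lam a) * c j)
        (by rw [← hTv]; exact W.sub_mem (hW _ hv) (W.smul_mem _ hv)) j hj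
      have hja : j ≠ a := fun h => ha (h ▸ hj)
      have hne : lam j - lam a ≠ 0 := sub_ne_zero.mpr (fun h => hja (hlam h))
      have h2 := W.smul_mem (lam j - lam a)⁻¹ h1
      rwa [smul_smul, inv_mul_cancel_left₀ hne] at h2
    rcases Finset.mem_insert.mp hi with rfl | hi'
    · have : c i • B i = (∑ j ∈ insert i s, c j • B j) - ∑ j ∈ s, c j • B j := by
        rw [Finset.sum_insert ha]; abel
      rw [this]
      exact W.sub_mem hv (W.sum_mem (fun j hj => hmem j hj))
    · exact hmem i hi'

/-- Theorem 0.1(2), second part: for `a ∈ ℤ + 1/2` one has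
`SA_{a,1/2} ≅ SA_{1/2,1/2}`; moreover in `SA_{1/2,1/2}` the vector `y_{-1/2}`
(here `y (-1)`) is annihilated by all `L_i` and `G_{i+1/2}`, the line
`ℂ·y_{-1/2}` is a submodule, and the quotient `SA_{1/2,1/2}/ℂ·y_{-1/2}` is
simple (equivalently, the line is proper and every submodule containing it is
the line or everything). -/
theorem SA_halfint_iso_and_simple_quotient (m : ℤ)
    (S : NSMod 0) (F : SAFamily ((m : ℂ) + 1 / 2) (1 / 2) S)
    (S₀ : NSMod 0) (F₀ : SAFamily (1 / 2) (1 / 2) S₀) :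
    NSIso S S₀ ∧
      (∀ i : ℤ, S₀.L i (F₀.y (-1)) = 0 ∧ S₀.G i (F₀.y (-1)) = 0) ∧
      S₀.IsSubmodule (Submodule.span ℂ {F₀.y (-1)}) ∧
      Submodule.span ℂ {F₀.y (-1)} ≠ ⊤ ∧
      (∀ W : Submodule ℂ S₀.carrier, S₀.IsSubmodule W →
        Submodule.span ℂ {F₀.y (-1)} ≤ W →
          W = Submodule.span ℂ {F₀.y (-1)} ∨ W = ⊤) := by
  classical
  -- Bases from the SA families
  have hBspan : ⊤ ≤ Submodule.span ℂ (Set.range (Sum.elim F.x F.y)) := by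
    rw [Set.Sum.elim_range, F.spans]
  let B : Module.Basis (ℤ ⊕ ℤ) ℂ S.carrier := Module.Basis.mk F.indep hBspan
  have hBspan₀ : ⊤ ≤ Submodule.span ℂ (Set.range (Sum.elim F₀.x F₀.y)) := by
    rw [Set.Sum.elim_range, F₀.spans]
  let B₀ : Module.Basis (ℤ ⊕ ℤ) ℂ S₀.carrier := Module.Basis.mk F₀.indep hBspan₀
  have hBx : ∀ j : ℤ, B (Sum.inl j) = F.x j := by intro j; simp [B, Module.Basis.mk_apply]
  have hBy : ∀ j : ℤ, B (Sum.inr j) = F.y j := by intro j; simp [B, Module.Basis.mk_apply]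
  have hB₀x : ∀ j : ℤ, B₀ (Sum.inl j) = F₀.x j := by intro j; simp [B₀, Module.Basis.mk_apply]
  have hB₀y : ∀ j : ℤ, B₀ (Sum.inr j) = F₀.y j := by intro j; simp [B₀, Module.Basis.mk_apply]
  -- The isomorphism
  let e : (ℤ ⊕ ℤ) ≃ (ℤ ⊕ ℤ) := Equiv.sumCongr (Equiv.addRight m) (Equiv.addRight m)
  let f := B.equiv B₀ e
  have hfx : ∀ j : ℤ, f (F.x j) = F₀.x (j + m) := by
    intro j; rw [← hBx j]
    rw [show f (B (Sum.inl j)) = B₀ (e (Sum.inl j)) from B.equiv_apply _ B₀ e]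
    simp [e, hB₀x]
  have hfy : ∀ j : ℤ, f (F.y j) = F₀.y (j + m) := by
    intro j; rw [← hBy j]
    rw [show f (B (Sum.inr j)) = B₀ (e (Sum.inr j)) from B.equiv_apply _ B₀ e]
    simp [e, hB₀y]
  have hiso : NSIso S S₀ := by
    refine ⟨⟨f.toLinearMap, ?_, ?_⟩, ?_⟩
    · intro i v
      have key : (f.toLinearMap ∘ₗ S.L i) = (S₀.L i ∘ₗ f.toLinearMap) := by
        apply B.ext
        rintro (j | j) <;>
          simp only [LinearMap.comp_apply, LinearEquiv.coe_coe, hBx, hBy]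
        · rw [F.act_Lx, map_smul, hfx, hfx, F₀.act_Lx,
            show i + j + m = i + (j + m) from by ring]
          congr 1; push_cast; ring
        · rw [F.act_Ly, map_smul, hfy, hfy, F₀.act_Ly,
            show i + j + m = i + (j + m) from by ring]
          congr 1; push_cast; ring
      exact LinearMap.congr_fun key v
    · intro i v
      have key : (f.toLinearMap ∘ₗ S.G i) = (S₀.G i ∘ₗ f.toLinearMap) := by
        apply B.ext
        rintro (j | j) <;>
          simp only [LinearMap.comp_apply, LinearEquiv.coe_coe, hBx, hBy]
        · rw [F.act_Gx, hfx, hfy, F₀.act_Gx,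
            show i + j + m = i + (j + m) from by ring]
        · rw [F.act_Gy, map_smul, hfy, hfx, F₀.act_Gy,
            show i + j + 1 + m = i + (j + m) + 1 from by ring]
          congr 1; push_cast; ring
      exact LinearMap.congr_fun key v
    · exact f.bijective
  -- Annihilation of y (-1)
  have hann : ∀ i : ℤ, S₀.L i (F₀.y (-1)) = 0 ∧ S₀.G i (F₀.y (-1)) = 0 := by
    intro i
    constructor
    · rw [F₀.act_Ly]; norm_num
    · rw [F₀.act_Gy]; norm_num
  -- The line is a submodule
  have hline : S₀.IsSubmodule (Submodule.span ℂ {F₀.y (-1)}) := by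
    constructor <;> intro i v hv <;>
      obtain ⟨c, rfl⟩ := Submodule.mem_span_singleton.mp hv <;>
      simp [map_smul, (hann i).1, (hann i).2]
  -- x 0 is not in the line
  have hx0 : F₀.x 0 ∉ Submodule.span ℂ {F₀.y (-1)} := by
    intro h
    obtain ⟨c, hc⟩ := Submodule.mem_span_singleton.mp h
    rw [← hB₀x 0, ← hB₀y (-1)] at hc
    have h1 := congrArg (fun w => B₀.repr w (Sum.inl 0)) hc
    simpa [Finsupp.single_apply] using h1
  -- generation lemmas
  have htop : ∀ W : Submodule ℂ S₀.carrier, S₀.IsSubmodule W →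
      (∀ k : ℤ, F₀.x k ∈ W) → W = ⊤ := by
    intro W hW hx
    have hy : ∀ k : ℤ, F₀.y k ∈ W := by
      intro k
      have h := hW.2 k _ (hx 0)
      rwa [F₀.act_Gx, add_zero] at h
    rw [eq_top_iff, ← F₀.spans, Submodule.span_le]
    rintro v (⟨k, rfl⟩ | ⟨k, rfl⟩)
    · exact hx k
    · exact hy k
  have hfromx : ∀ W : Submodule ℂ S₀.carrier, S₀.IsSubmodule W →
      ∀ j : ℤ, F₀.x j ∈ W → W = ⊤ := by
    intro W hW j hj
    have hy0 : F₀.y 0 ∈ W := by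
      have h := hW.2 (-j) _ hj
      rwa [F₀.act_Gx, neg_add_cancel] at h
    have hx : ∀ k : ℤ, F₀.x k ∈ W := by
      intro k
      have h := hW.2 (k - 1) _ hy0
      have heq : S₀.G (k - 1) (F₀.y 0) = F₀.x k := by
        rw [F₀.act_Gy, show k - 1 + 0 + 1 = k from by ring]
        norm_num
      rwa [heq] at h
    exact htop W hW hx
  have hfromy : ∀ W : Submodule ℂ S₀.carrier, S₀.IsSubmodule W →
      ∀ j : ℤ, j ≠ -1 → F₀.y j ∈ W → W = ⊤ := by
    intro W hW j hjne hj
    have h := hW.2 (-j - 1) _ hj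
    have heq : S₀.G (-j - 1) (F₀.y j) = (1 + (j : ℂ)) • F₀.x 0 := by
      rw [F₀.act_Gy, show -j - 1 + j + 1 = 0 from by ring]
      congr 1; push_cast; ring
    rw [heq] at h
    have hne : (1 : ℂ) + (j : ℂ) ≠ 0 := by
      intro h0
      have h1 : ((j : ℤ) : ℂ) = ((-1 : ℤ) : ℂ) := by push_cast; linear_combination h0
      exact hjne (by exact_mod_cast h1)
    have h2 := W.smul_mem (1 + (j : ℂ))⁻¹ h
    rw [smul_smul, inv_mul_cancel₀ hne, one_smul] at h2
    exact hfromx W hW 0 h2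
  -- L 0 eigenvalue structure
  set lam : ℤ ⊕ ℤ → ℂ := Sum.elim (fun j => (j : ℂ) + 1/2) (fun j => (j : ℂ) + 1)
    with hlam_def
  have hT : ∀ i, S₀.L 0 (B₀ i) = lam i • B₀ i := by
    rintro (j | j)
    · rw [hB₀x, F₀.act_Lx, zero_add]
      simp only [hlam_def, Sum.elim_inl]
      congr 1; push_cast; ring
    · rw [hB₀y, F₀.act_Ly, zero_add]
      simp only [hlam_def, Sum.elim_inr]
      congr 1; push_cast; ring
  have hlaminj : Function.Injective lam := by
    rintro (j | j) (k | k) h <;>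
      simp only [hlam_def, Sum.elim_inl, Sum.elim_inr] at h
    · have h1 : ((2*j : ℤ) : ℂ) = ((2*k : ℤ) : ℂ) := by push_cast; linear_combination 2*h
      have h2 : (2*j : ℤ) = 2*k := by exact_mod_cast h1
      have h3 : j = k := by omega
      rw [h3]
    · have h1 : ((2*j : ℤ) : ℂ) = ((2*k+1 : ℤ) : ℂ) := by push_cast; linear_combination 2*h
      have h2 : (2*j : ℤ) = 2*k+1 := by exact_mod_cast h1
      exact absurd h2 (by omega)
    · have h1 : ((2*j+1 : ℤ) : ℂ) = ((2*k : ℤ) : ℂ) := by push_cast; linear_combination 2*h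
      have h2 : (2*j+1 : ℤ) = 2*k := by exact_mod_cast h1
      exact absurd h2 (by omega)
    · have h1 : ((2*j : ℤ) : ℂ) = ((2*k : ℤ) : ℂ) := by push_cast; linear_combination 2*h
      have h2 : (2*j : ℤ) = 2*k := by exact_mod_cast h1
      have h3 : j = k := by omega
      rw [h3]
  -- Simplicity of the quotient
  have hmain : ∀ W : Submodule ℂ S₀.carrier, S₀.IsSubmodule W →
      Submodule.span ℂ {F₀.y (-1)} ≤ W →
      W = Submodule.span ℂ {F₀.y (-1)} ∨ W = ⊤ := by
    intro W hW hle
    by_cases hWle : W ≤ Submodule.span ℂ {F₀.y (-1)}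
    · exact Or.inl (le_antisymm hWle hle)
    right
    obtain ⟨v, hvW, hv_notin⟩ := SetLike.not_le_iff_exists.mp hWle
    have hsum : (∑ i ∈ (B₀.repr v).support, (B₀.repr v) i • B₀ i) = v := by
      conv_rhs => rw [← B₀.linearCombination_repr v]
      rw [Finsupp.linearCombination_apply]
      rfl
    have hcomp := eigen_component B₀ lam hlaminj (S₀.L 0) hT W (hW.1 0)
      (B₀.repr v).support (fun i => B₀.repr v i) (by rw [hsum]; exact hvW)
    by_cases hsupp : ∀ i ∈ (B₀.repr v).support, i = Sum.inr (-1 : ℤ)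
    · exfalso
      apply hv_notin
      rw [Submodule.mem_span_singleton]
      refine ⟨B₀.repr v (Sum.inr (-1)), ?_⟩
      have hsub : (B₀.repr v).support ⊆ {Sum.inr (-1)} :=
        fun i hi => Finset.mem_singleton.mpr (hsupp i hi)
      calc B₀.repr v (Sum.inr (-1)) • F₀.y (-1)
          = ∑ i ∈ ({Sum.inr (-1 : ℤ)} : Finset (ℤ ⊕ ℤ)), B₀.repr v i • B₀ i := by
            rw [Finset.sum_singleton, hB₀y]
        _ = ∑ i ∈ (B₀.repr v).support, B₀.repr v i • B₀ i :=
            (Finset.sum_subset hsub (fun i _ hi => by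
              rw [Finsupp.notMem_support_iff.mp hi, zero_smul])).symm
        _ = v := hsum
    push_neg at hsupp
    obtain ⟨i, hi_supp, hi_ne⟩ := hsupp
    have hci : B₀.repr v i ≠ 0 := Finsupp.mem_support_iff.mp hi_supp
    have hBiW : B₀ i ∈ W := by
      have h1 := hcomp i hi_supp
      have h2 := W.smul_mem (B₀.repr v i)⁻¹ h1
      rwa [smul_smul, inv_mul_cancel₀ hci, one_smul] at h2
    rcases i with j | j
    · rw [hB₀x] at hBiW
      exact hfromx W hW j hBiW
    · rw [hB₀y] at hBiW
      exact hfromy W hW j (fun h => hi_ne (by rw [h])) hBiW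
  exact ⟨hiso, hann, hline, fun h => hx0 (by rw [h]; trivial), hmain⟩
end
end

section
/- In SA_{−1/2,1/2} the vector y_{1/2} is annihilated by all the operators L_i and G_{i+1/2} (i ∈ ℤ), so the line ℂ·y_{1/2} is a submodule. The linear map f from SA'_{0,1} (the submodule of SA_{0,1} spanned by {x_j : j ∈ ℤ, j ≠ 0} ∪ {y_{j+1/2} : j ∈ ℤ}) to the quotient module SA_{−1/2,1/2}/ℂ·y_{1/2}, determined by f(x_i) = (1/i)·[y_{i+1/2}] for 0 ≠ i ∈ ℤ and f(y_{j+1/2}) = [x_{j+1}] for j ∈ ℤ, is an isomorphism of Neveu–Schwarz modules. Consequently SA'_{0,1} ≅ SA_{−1/2,1/2}/ℂ·y_{1/2} ≅ SA_{1/2,1/2}/ℂ·y_{−1/2}. -/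
noncomputable section

open Submodule

/-- The submodule `SA'_{0,1}` of a realization of `SA_{0,1}`: the span of
`{x_j : j ≠ 0} ∪ {y_{j+1/2} : j ∈ ℤ}`. -/
def SA01primeSpan (S : NSMod 0) (F : SAFamily 0 1 S) : Submodule ℂ S.carrier :=
  Submodule.span ℂ (F.x '' {j : ℤ | j ≠ 0} ∪ Set.range F.y)

/-- The basis of the underlying space of a realization of `SA_{a,b}`. -/
def SAFamily.toBasis_s4 {a b : ℂ} {S : NSMod 0} (F : SAFamily a b S) :
    Module.Basis (ℤ ⊕ ℤ) ℂ S.carrier :=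
  Module.Basis.mk F.indep (by rw [Set.Sum.elim_range, F.spans])

@[simp] lemma SAFamily.toBasis_inl_s4 {a b : ℂ} {S : NSMod 0} (F : SAFamily a b S) (j : ℤ) :
    F.toBasis_s4 (Sum.inl j) = F.x j := by
  simp [SAFamily.toBasis_s4]

@[simp] lemma SAFamily.toBasis_inr_s4 {a b : ℂ} {S : NSMod 0} (F : SAFamily a b S) (j : ℤ) :
    F.toBasis_s4 (Sum.inr j) = F.y j := by
  simp [SAFamily.toBasis_s4]

/-- Theorem 0.2: in `SA_{-1/2,1/2}` the vector `y_{1/2}`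
(here `y 0`) is annihilated by all operators, so `ℂ·y_{1/2}` is a submodule;
the map `f` with `f(x_i) = (1/i)·[y_{i+1/2}]` (`i ≠ 0`) and
`f(y_{j+1/2}) = [x_{j+1}]` restricts to an isomorphism of Neveu–Schwarz
modules `SA'_{0,1} ≅ SA_{-1/2,1/2}/ℂ·y_{1/2}`, and consequently
`SA'_{0,1} ≅ SA_{-1/2,1/2}/ℂ·y_{1/2} ≅ SA_{1/2,1/2}/ℂ·y_{-1/2}`. -/
theorem SA01prime_iso_quotients (S : NSMod 0) (F : SAFamily 0 1 S)
    (T : NSMod 0) (F' : SAFamily (-(1 / 2)) (1 / 2) T)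
    (U : NSMod 0) (F'' : SAFamily (1 / 2) (1 / 2) U) :
    (∀ i : ℤ, T.L i (F'.y 0) = 0 ∧ T.G i (F'.y 0) = 0) ∧
    T.IsSubmodule (Submodule.span ℂ {F'.y 0}) ∧
    (∀ hW : T.IsSubmodule (Submodule.span ℂ {F'.y 0}),
      ∃ f : S.carrier →ₗ[ℂ] T.carrier ⧸ Submodule.span ℂ {F'.y 0},
        (∀ i : ℤ, i ≠ 0 →
          f (F.x i) = ((i : ℂ))⁻¹ • Submodule.Quotient.mk (F'.y i)) ∧
        (∀ j : ℤ, f (F.y j) = Submodule.Quotient.mk (F'.x (j + 1))) ∧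
        (∀ m : ℤ, ∀ v ∈ SA01primeSpan S F,
          f (S.L m v)
            = Submodule.mapQ (Submodule.span ℂ {F'.y 0})
                (Submodule.span ℂ {F'.y 0}) (T.L m)
                (fun w hw => hW.1 m w hw) (f v)) ∧
        (∀ k : ℤ, ∀ v ∈ SA01primeSpan S F,
          f (S.G k v)
            = Submodule.mapQ (Submodule.span ℂ {F'.y 0})
                (Submodule.span ℂ {F'.y 0}) (T.G k)
                (fun w hw => hW.2 k w hw) (f v)) ∧
        Set.InjOn f ↑(SA01primeSpan S F) ∧
        (∀ q : T.carrier ⧸ Submodule.span ℂ {F'.y 0},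
          ∃ v ∈ SA01primeSpan S F, f v = q)) ∧
    (∀ (hW : T.IsSubmodule (Submodule.span ℂ {F'.y 0}))
        (hW'' : U.IsSubmodule (Submodule.span ℂ {F''.y (-1)})),
      ∃ g : (T.carrier ⧸ Submodule.span ℂ {F'.y 0}) →ₗ[ℂ]
          (U.carrier ⧸ Submodule.span ℂ {F''.y (-1)}),
        Function.Bijective g ∧
        (∀ (m : ℤ) (q : T.carrier ⧸ Submodule.span ℂ {F'.y 0}),
          g (Submodule.mapQ (Submodule.span ℂ {F'.y 0})
              (Submodule.span ℂ {F'.y 0}) (T.L m) (fun w hw => hW.1 m w hw) q)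
            = Submodule.mapQ (Submodule.span ℂ {F''.y (-1)})
                (Submodule.span ℂ {F''.y (-1)}) (U.L m)
                (fun w hw => hW''.1 m w hw) (g q)) ∧
        (∀ (k : ℤ) (q : T.carrier ⧸ Submodule.span ℂ {F'.y 0}),
          g (Submodule.mapQ (Submodule.span ℂ {F'.y 0})
              (Submodule.span ℂ {F'.y 0}) (T.G k) (fun w hw => hW.2 k w hw) q)
            = Submodule.mapQ (Submodule.span ℂ {F''.y (-1)})
                (Submodule.span ℂ {F''.y (-1)}) (U.G k)
                (fun w hw => hW''.2 k w hw) (g q))) := by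
  classical
  have hyL : ∀ i : ℤ, T.L i (F'.y 0) = 0 := by
    intro i
    rw [F'.act_Ly]
    norm_num
  have hyG : ∀ i : ℤ, T.G i (F'.y 0) = 0 := by
    intro i
    rw [F'.act_Gy]
    norm_num
  have hsub : T.IsSubmodule (Submodule.span ℂ {F'.y 0}) := by
    constructor
    · intro m v hv
      obtain ⟨cc, rfl⟩ := Submodule.mem_span_singleton.1 hv
      rw [map_smul, hyL]
      simp
    · intro k v hv
      obtain ⟨cc, rfl⟩ := Submodule.mem_span_singleton.1 hv
      rw [map_smul, hyG]
      simp
  have hmk0 : (Submodule.Quotient.mk (F'.y 0) : T.carrier ⧸ Submodule.span ℂ {F'.y 0}) = 0 :=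
    (Submodule.Quotient.mk_eq_zero _).2 (Submodule.mem_span_singleton_self _)
  have hic : ∀ i : ℤ, i ≠ 0 → ((i : ℂ) ≠ 0) := fun i hi => Int.cast_ne_zero.2 hi
  refine ⟨fun i => ⟨hyL i, hyG i⟩, hsub, ?_, ?_⟩
  · -- Part 3 : the isomorphism SA'_{0,1} ≅ SA_{-1/2,1/2}/ℂ·y_{1/2}
    intro hW
    let gfun : ℤ ⊕ ℤ → T.carrier ⧸ Submodule.span ℂ {F'.y 0} := Sum.elim
      (fun i => if i = 0 then 0 else ((i : ℂ))⁻¹ • Submodule.Quotient.mk (F'.y i))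
      (fun j => Submodule.Quotient.mk (F'.x (j + 1)))
    let f : S.carrier →ₗ[ℂ] T.carrier ⧸ Submodule.span ℂ {F'.y 0} :=
      (F.toBasis_s4).constr ℂ gfun
    have fx : ∀ i : ℤ, f (F.x i) =
        if i = 0 then 0 else ((i : ℂ))⁻¹ • Submodule.Quotient.mk (F'.y i) := by
      intro i
      have h := (F.toBasis_s4).constr_basis ℂ gfun (Sum.inl i)
      rw [SAFamily.toBasis_inl_s4] at h
      exact h
    have fy : ∀ j : ℤ, f (F.y j) = Submodule.Quotient.mk (F'.x (j + 1)) := by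
      intro j
      have h := (F.toBasis_s4).constr_basis ℂ gfun (Sum.inr j)
      rw [SAFamily.toBasis_inr_s4] at h
      exact h
    have hxmem : ∀ i : ℤ, i ≠ 0 → F.x i ∈ SA01primeSpan S F := fun i hi =>
      Submodule.subset_span (Or.inl ⟨i, hi, rfl⟩)
    have hymem : ∀ j : ℤ, F.y j ∈ SA01primeSpan S F := fun j =>
      Submodule.subset_span (Or.inr ⟨j, rfl⟩)
    have commL : ∀ m : ℤ, ∀ v ∈ SA01primeSpan S F,
        f (S.L m v) = Submodule.mapQ (Submodule.span ℂ {F'.y 0})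
          (Submodule.span ℂ {F'.y 0}) (T.L m) (fun w hw => hW.1 m w hw) (f v) := by
      intro m v hv
      induction hv using Submodule.span_induction with
      | mem v hv =>
        rcases hv with ⟨i, hi, rfl⟩ | ⟨j, rfl⟩
        · have hi' : i ≠ 0 := hi
          rw [F.act_Lx, map_smul, fx, fx, if_neg hi',
            map_smul, Submodule.mapQ_apply, F'.act_Ly, Submodule.Quotient.mk_smul]
          by_cases hmi : m + i = 0
          · rw [if_pos hmi, smul_zero, hmi, hmk0]
            simp
          · rw [if_neg hmi]
            have hmic : ((m + i : ℤ) : ℂ) ≠ 0 := hic _ hmi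
            have hi'' : ((i : ℂ)) ≠ 0 := hic _ hi'
            match_scalars
            push_cast at hmic ⊢
            field_simp
            ring
        · rw [F.act_Ly, map_smul, fy, fy, Submodule.mapQ_apply, F'.act_Lx,
            Submodule.Quotient.mk_smul]
          have hidx : m + (j + 1) = m + j + 1 := by ring
          rw [hidx]
          match_scalars
          push_cast
          ring
      | zero => simp
      | add u w hu hw ihu ihw => simp only [map_add, ihu, ihw]
      | smul c u hu ih => simp only [map_smul, ih]
    have commG : ∀ k : ℤ, ∀ v ∈ SA01primeSpan S F,
        f (S.G k v) = Submodule.mapQ (Submodule.span ℂ {F'.y 0})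
          (Submodule.span ℂ {F'.y 0}) (T.G k) (fun w hw => hW.2 k w hw) (f v) := by
      intro k v hv
      induction hv using Submodule.span_induction with
      | mem v hv =>
        rcases hv with ⟨i, hi, rfl⟩ | ⟨j, rfl⟩
        · have hi' : i ≠ 0 := hi
          rw [F.act_Gx, fy, fx, if_neg hi', map_smul, Submodule.mapQ_apply,
            F'.act_Gy, Submodule.Quotient.mk_smul]
          have hi'' : ((i : ℂ)) ≠ 0 := hic _ hi'
          match_scalars
          push_cast
          field_simp
          ring
        · rw [F.act_Gy, map_smul, fx, fy, Submodule.mapQ_apply, F'.act_Gx]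
          have hidx : k + (j + 1) = k + j + 1 := by ring
          rw [hidx]
          by_cases hkj : k + j + 1 = 0
          · rw [if_pos hkj, smul_zero, hkj, hmk0]
          · rw [if_neg hkj]
            have hkjc : ((k + j + 1 : ℤ) : ℂ) ≠ 0 := hic _ hkj
            match_scalars
            push_cast at hkjc ⊢
            field_simp
            ring
      | zero => simp
      | add u w hu hw ihu ihw => simp only [map_add, ihu, ihw]
      | smul c u hu ih => simp only [map_smul, ih]
    -- inverse map
    let ψ : T.carrier →ₗ[ℂ] S.carrier :=
      (F'.toBasis_s4).constr ℂ (Sum.elim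
        (fun j : ℤ => F.y (j - 1))
        (fun j : ℤ => if j = 0 then 0 else (j : ℂ) • F.x j))
    have ψx : ∀ j : ℤ, ψ (F'.x j) = F.y (j - 1) := by
      intro j
      have h := (F'.toBasis_s4).constr_basis ℂ (Sum.elim
        (fun j : ℤ => F.y (j - 1))
        (fun j : ℤ => if j = 0 then 0 else (j : ℂ) • F.x j)) (Sum.inl j)
      rw [SAFamily.toBasis_inl_s4] at h
      exact h
    have ψy : ∀ j : ℤ, ψ (F'.y j) = if j = 0 then 0 else (j : ℂ) • F.x j := by
      intro j
      have h := (F'.toBasis_s4).constr_basis ℂ (Sum.elim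
        (fun j : ℤ => F.y (j - 1))
        (fun j : ℤ => if j = 0 then 0 else (j : ℂ) • F.x j)) (Sum.inr j)
      rw [SAFamily.toBasis_inr_s4] at h
      exact h
    have hker : Submodule.span ℂ {F'.y 0} ≤ LinearMap.ker ψ := by
      rw [Submodule.span_le, Set.singleton_subset_iff]
      simp [LinearMap.mem_ker, ψy]
    have hTspan : ∀ w : T.carrier,
        w ∈ Submodule.span ℂ (Set.range F'.x ∪ Set.range F'.y) := by
      intro w
      rw [F'.spans]
      exact Submodule.mem_top
    have ψmem : ∀ w : T.carrier, ψ w ∈ SA01primeSpan S F := by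
      intro w
      induction hTspan w using Submodule.span_induction with
      | mem u hu =>
        rcases hu with ⟨j, rfl⟩ | ⟨j, rfl⟩
        · rw [ψx]
          exact hymem _
        · rw [ψy]
          by_cases hj : j = 0
          · rw [if_pos hj]
            exact zero_mem _
          · rw [if_neg hj]
            exact Submodule.smul_mem _ _ (hxmem j hj)
      | zero => simp
      | add u w hu hw ihu ihw => rw [map_add]; exact add_mem ihu ihw
      | smul c u hu ih => rw [map_smul]; exact Submodule.smul_mem _ _ ih
    have fψ : ∀ w : T.carrier, f (ψ w) = Submodule.Quotient.mk w := by
      intro w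
      induction hTspan w using Submodule.span_induction with
      | mem u hu =>
        rcases hu with ⟨j, rfl⟩ | ⟨j, rfl⟩
        · rw [ψx, fy]
          have hidx : j - 1 + 1 = j := by ring
          rw [hidx]
        · by_cases hj : j = 0
          · subst hj
            rw [ψy, if_pos rfl, map_zero, hmk0]
          · rw [ψy, if_neg hj, map_smul, fx, if_neg hj, smul_smul,
              mul_inv_cancel₀ (hic j hj), one_smul]
      | zero => simp
      | add u w hu hw ihu ihw =>
        rw [map_add, map_add, ihu, ihw, Submodule.Quotient.mk_add]
      | smul c u hu ih =>
        rw [map_smul, map_smul, ih, Submodule.Quotient.mk_smul]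
    have ψf : ∀ v ∈ SA01primeSpan S F,
        Submodule.liftQ _ ψ hker (f v) = v := by
      intro v hv
      induction hv using Submodule.span_induction with
      | mem v hv =>
        rcases hv with ⟨i, hi, rfl⟩ | ⟨j, rfl⟩
        · have hi' : i ≠ 0 := hi
          rw [fx, if_neg hi', map_smul, Submodule.liftQ_apply, ψy, if_neg hi',
            smul_smul, inv_mul_cancel₀ (hic i hi'), one_smul]
        · rw [fy, Submodule.liftQ_apply, ψx]
          have hidx : j + 1 - 1 = j := by ring
          rw [hidx]
      | zero => simp
      | add u w hu hw ihu ihw => rw [map_add, map_add, ihu, ihw]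
      | smul c u hu ih => rw [map_smul, map_smul, ih]
    refine ⟨f, fun i hi => by rw [fx, if_neg hi], fy, commL, commG, ?_, ?_⟩
    · intro v hv w hw h
      have h1 := ψf v hv
      have h2 := ψf w hw
      rw [← h1, ← h2, h]
    · intro q
      obtain ⟨w, rfl⟩ := Submodule.Quotient.mk_surjective _ q
      exact ⟨ψ w, ψmem w, fψ w⟩
  · -- Part 4 : the isomorphism of the two quotients
    intro hW hW''
    let e : (ℤ ⊕ ℤ) ≃ (ℤ ⊕ ℤ) := Equiv.sumCongr (Equiv.subRight 1) (Equiv.subRight 1)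
    let h := F'.toBasis_s4.equiv F''.toBasis_s4 e
    have hx : ∀ j : ℤ, h (F'.x j) = F''.x (j - 1) := by
      intro j
      have h1 := Module.Basis.equiv_apply F'.toBasis_s4 (Sum.inl j) F''.toBasis_s4 e
      rw [SAFamily.toBasis_inl_s4] at h1
      have h2 : e (Sum.inl j) = Sum.inl (j - 1) := rfl
      rw [h2, SAFamily.toBasis_inl_s4] at h1
      exact h1
    have hy : ∀ j : ℤ, h (F'.y j) = F''.y (j - 1) := by
      intro j
      have h1 := Module.Basis.equiv_apply F'.toBasis_s4 (Sum.inr j) F''.toBasis_s4 e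
      rw [SAFamily.toBasis_inr_s4] at h1
      have h2 : e (Sum.inr j) = Sum.inr (j - 1) := rfl
      rw [h2, SAFamily.toBasis_inr_s4] at h1
      exact h1
    have hy0 : h (F'.y 0) = F''.y (-1) := by
      rw [hy]
      norm_num
    have hmaps : ∀ w ∈ Submodule.span ℂ {F'.y 0},
        h.toLinearMap w ∈ Submodule.span ℂ {F''.y (-1)} := by
      intro w hw
      obtain ⟨c, rfl⟩ := Submodule.mem_span_singleton.1 hw
      show h (c • F'.y 0) ∈ _
      rw [map_smul, hy0]
      exact Submodule.smul_mem _ _ (Submodule.mem_span_singleton_self _)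
    have hL : ∀ (m : ℤ) (v : T.carrier), h (T.L m v) = U.L m (h v) := by
      intro m
      have hcomp : h.toLinearMap.comp (T.L m) = (U.L m).comp h.toLinearMap := by
        apply Module.Basis.ext F'.toBasis_s4
        rintro (j | j)
        · simp only [LinearMap.comp_apply, LinearEquiv.coe_coe, SAFamily.toBasis_inl_s4]
          rw [F'.act_Lx, map_smul, hx, hx, F''.act_Lx]
          have hidx : m + (j - 1) = m + j - 1 := by ring
          rw [hidx]
          match_scalars
          push_cast
          ring
        · simp only [LinearMap.comp_apply, LinearEquiv.coe_coe, SAFamily.toBasis_inr_s4]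
          rw [F'.act_Ly, map_smul, hy, hy, F''.act_Ly]
          have hidx : m + (j - 1) = m + j - 1 := by ring
          rw [hidx]
          match_scalars
          push_cast
          ring
      exact fun v => LinearMap.congr_fun hcomp v
    have hG : ∀ (k : ℤ) (v : T.carrier), h (T.G k v) = U.G k (h v) := by
      intro k
      have hcomp : h.toLinearMap.comp (T.G k) = (U.G k).comp h.toLinearMap := by
        apply Module.Basis.ext F'.toBasis_s4
        rintro (j | j)
        · simp only [LinearMap.comp_apply, LinearEquiv.coe_coe, SAFamily.toBasis_inl_s4]
          rw [F'.act_Gx, hy, hx, F''.act_Gx]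
          have hidx : k + (j - 1) = k + j - 1 := by ring
          rw [hidx]
        · simp only [LinearMap.comp_apply, LinearEquiv.coe_coe, SAFamily.toBasis_inr_s4]
          rw [F'.act_Gy, map_smul, hx, hy, F''.act_Gy]
          have hidx1 : k + j + 1 - 1 = k + j := by ring
          have hidx2 : k + (j - 1) + 1 = k + j := by ring
          rw [hidx1, hidx2]
          match_scalars
          push_cast
          ring
      exact fun v => LinearMap.congr_fun hcomp v
    refine ⟨Submodule.mapQ (Submodule.span ℂ {F'.y 0}) (Submodule.span ℂ {F''.y (-1)}) h.toLinearMap hmaps, ⟨?_, ?_⟩, ?_, ?_⟩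
    · -- injective
      have hker0 : ∀ q, Submodule.mapQ (Submodule.span ℂ {F'.y 0}) (Submodule.span ℂ {F''.y (-1)}) h.toLinearMap hmaps q = 0 → q = 0 := by
        intro q hq
        obtain ⟨v, rfl⟩ := Submodule.Quotient.mk_surjective _ q
        rw [Submodule.mapQ_apply, Submodule.Quotient.mk_eq_zero] at hq
        rw [Submodule.Quotient.mk_eq_zero]
        obtain ⟨c, hc⟩ := Submodule.mem_span_singleton.1 hq
        have heq : h (c • F'.y 0) = h v := by
          rw [map_smul, hy0]
          exact hc
        have := h.injective heq
        rw [← this]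
        exact Submodule.smul_mem _ _ (Submodule.mem_span_singleton_self _)
      intro q1 q2 hq
      have h0 : q1 - q2 = 0 := hker0 _ (by rw [map_sub, hq, sub_self])
      exact sub_eq_zero.1 h0
    · -- surjective
      intro q
      obtain ⟨w, rfl⟩ := Submodule.Quotient.mk_surjective _ q
      obtain ⟨v, rfl⟩ := h.surjective w
      exact ⟨Submodule.Quotient.mk v, by rw [Submodule.mapQ_apply]; rfl⟩
    · intro m q
      obtain ⟨v, rfl⟩ := Submodule.Quotient.mk_surjective _ q
      simp only [Submodule.mapQ_apply]
      exact congrArg _ (hL m v)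
    · intro k q
      obtain ⟨v, rfl⟩ := Submodule.Quotient.mk_surjective _ q
      simp only [Submodule.mapQ_apply]
      exact congrArg _ (hG k v)
end
end

section
/- Let a, b ∈ ℂ with 0 ≤ Re(a) < 1 and b ≠ 1, and let V be a highest weight module over the Neveu–Schwarz algebra with highest weight vector u of highest weight (c, h). Then the only submodule of the tensor product module V ⊗ SA'_{a,b} containing all the vectors u ⊗ v_m for m ∈ (1/2)ℤ is V ⊗ SA'_{a,b} itself. -/
noncomputable section

open Submodule

/-- Lemma 2.1: the tensor product `V ⊗ SA'_{a,b}` of a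
highest weight module `V` (highest weight vector `u` of weight `(c,h)`) with
an intermediate series module is generated by the vectors `u ⊗ v_m`
(`m ∈ (1/2)ℤ`), i.e. the only submodule containing all `u ⊗ x_m` and all
`u ⊗ y_{m+1/2}` is the whole module. -/
theorem tensor_generated_by_top_row (a b c h : ℂ)
    (ha0 : 0 ≤ a.re) (ha1 : a.re < 1) (hb : b ≠ 1)
    (V : NSMod c) (u : V.carrier) (hu : IsHW h V u)
    (S : NSMod 0) (F : SA'Family a b S)
    (T : NSMod c) (tw : TensorWitness V S T)
    (W : Submodule ℂ T.carrier) (hW : T.IsSubmodule W)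
    (hx : ∀ m : ℤ, tw.t u (F.x m) ∈ W)
    (hy : ∀ m : ℤ, tw.t u (F.y m) ∈ W) :
    W = ⊤ := by
  classical
  obtain ⟨hWL, hWG⟩ := hW
  let pr := Submodule.linearProjOfIsCompl V.even V.odd V.compl
  let P : V.carrier →ₗ[ℂ] V.carrier := V.even.subtype.comp pr
  have Pid : ∀ w, w ∈ V.even → P w = w := by
    intro w hw
    have h1 : pr w = ⟨w, hw⟩ :=
      Submodule.linearProjOfIsCompl_apply_left V.compl ⟨w, hw⟩
    simp [P, h1]
  have Pzero : ∀ w, w ∈ V.odd → P w = 0 := by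
    intro w hw
    have h1 : pr w = 0 :=
      Submodule.linearProjOfIsCompl_apply_right' V.compl hw
    simp [P, h1]
  let σ : V.carrier →ₗ[ℂ] V.carrier := (2 : ℂ) • P - LinearMap.id
  have decomp : ∀ v : V.carrier, ∃ e ∈ V.even, ∃ o ∈ V.odd, v = e + o := by
    intro v
    have hv : v ∈ V.even ⊔ V.odd := by rw [V.compl.sup_eq_top]; trivial
    obtain ⟨e, he, o, ho, rfl⟩ := Submodule.mem_sup.mp hv
    exact ⟨e, he, o, ho, rfl⟩
  have σ_spec : ∀ e o : V.carrier, e ∈ V.even → o ∈ V.odd → σ (e + o) = e - o := by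
    intro e o he ho
    simp only [σ, LinearMap.sub_apply, LinearMap.smul_apply, LinearMap.id_apply,
      map_add, Pid e he, Pzero o ho, add_zero]
    module
  have σσ : ∀ v, σ (σ v) = v := by
    intro v
    obtain ⟨e, he, o, ho, rfl⟩ := decomp v
    rw [σ_spec e o he ho, sub_eq_add_neg, σ_spec e (-o) he (V.odd.neg_mem ho)]
    abel
  have σL : ∀ (k : ℤ) (v : V.carrier), σ (V.L k v) = V.L k (σ v) := by
    intro k v
    obtain ⟨e, he, o, ho, rfl⟩ := decomp v
    rw [σ_spec e o he ho, map_sub, map_add,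
      σ_spec (V.L k e) (V.L k o) (V.mapsL_even k e he) (V.mapsL_odd k o ho)]
  have σG : ∀ (k : ℤ) (v : V.carrier), σ (V.G k v) = - V.G k (σ v) := by
    intro k v
    obtain ⟨e, he, o, ho, rfl⟩ := decomp v
    have h1 : V.G k (e + o) = V.G k o + V.G k e := by rw [map_add]; abel
    rw [h1, σ_spec _ _ (V.mapsG_odd k o ho) (V.mapsG_even k e he),
      σ_spec e o he ho, map_sub]
    abel
  let C : Submodule ℂ V.carrier :=
    { carrier := {v | (∀ m : ℤ, tw.t v (F.x m) ∈ W) ∧ ∀ m : ℤ, tw.t v (F.y m) ∈ W}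
      add_mem' := by
        rintro v w ⟨hv1, hv2⟩ ⟨hw1, hw2⟩
        refine ⟨fun m => ?_, fun m => ?_⟩
        · rw [map_add, LinearMap.add_apply]; exact W.add_mem (hv1 m) (hw1 m)
        · rw [map_add, LinearMap.add_apply]; exact W.add_mem (hv2 m) (hw2 m)
      zero_mem' := by
        refine ⟨fun m => ?_, fun m => ?_⟩ <;> simp [W.zero_mem]
      smul_mem' := by
        rintro r v ⟨hv1, hv2⟩
        refine ⟨fun m => ?_, fun m => ?_⟩
        · rw [map_smul, LinearMap.smul_apply]; exact W.smul_mem r (hv1 m)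
        · rw [map_smul, LinearMap.smul_apply]; exact W.smul_mem r (hv2 m) }
  have memC : ∀ v : V.carrier,
      v ∈ C ↔ (∀ m : ℤ, tw.t v (F.x m) ∈ W) ∧ ∀ m : ℤ, tw.t v (F.y m) ∈ W :=
    fun v => Iff.rfl
  have CL : ∀ (k : ℤ) (v : V.carrier), v ∈ C → V.L k v ∈ C := by
    intro k v hv
    obtain ⟨hv1, hv2⟩ := (memC v).mp hv
    refine (memC _).mpr ⟨fun m => ?_, fun m => ?_⟩
    · have h1 := tw.actL k v (F.x m)
      rw [F.act_Lx, map_smul] at h1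
      have h2 := eq_sub_of_add_eq h1.symm
      rw [h2]
      exact W.sub_mem (hWL k _ (hv1 m)) (W.smul_mem _ (hv1 (k + m)))
    · have h1 := tw.actL k v (F.y m)
      rw [F.act_Ly, map_smul] at h1
      have h2 := eq_sub_of_add_eq h1.symm
      rw [h2]
      exact W.sub_mem (hWL k _ (hv2 m)) (W.smul_mem _ (hv2 (k + m)))
  have CG : ∀ (k : ℤ) (v : V.carrier), v ∈ C → σ v ∈ C → V.G k v ∈ C := by
    intro k v hv hσ
    obtain ⟨e, he, o, ho, rfl⟩ := decomp v
    obtain ⟨hv1, hv2⟩ := (memC _).mp hv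
    rw [σ_spec e o he ho] at hσ
    obtain ⟨hs1, hs2⟩ := (memC _).mp hσ
    refine (memC _).mpr ⟨fun m => ?_, fun m => ?_⟩
    · have he' := tw.actG_even k e he (F.x m)
      have ho' := tw.actG_odd k o ho (F.x m)
      rw [F.act_Gx] at he' ho'
      have key : tw.t (V.G k (e + o)) (F.x m)
          = T.G k (tw.t (e + o) (F.x m)) - tw.t (e - o) (F.y (k + m)) := by
        simp only [map_add, map_sub, LinearMap.add_apply, LinearMap.sub_apply,
          he', ho']
        abel
      rw [key]
      exact W.sub_mem (hWG k _ (hv1 m)) (hs2 (k + m))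
    · have he' := tw.actG_even k e he (F.y m)
      have ho' := tw.actG_odd k o ho (F.y m)
      rw [F.act_Gy, map_smul] at he' ho'
      have key : tw.t (V.G k (e + o)) (F.y m)
          = T.G k (tw.t (e + o) (F.y m))
            - (a + 1 / 2 + (m : ℂ) + (2 * (k : ℂ) + 1) * (b - 1 / 2)) •
                tw.t (e - o) (F.x (k + m + 1)) := by
        simp only [map_add, map_sub, LinearMap.add_apply, LinearMap.sub_apply,
          he', ho', smul_sub]
        abel
      rw [key]
      exact W.sub_mem (hWG k _ (hv2 m)) (W.smul_mem _ (hs1 (k + m + 1)))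
  have hsub : V.IsSubmodule (C ⊓ Submodule.comap σ C) := by
    constructor
    · intro k v hv
      rw [Submodule.mem_inf, Submodule.mem_comap] at hv ⊢
      exact ⟨CL k v hv.1, by rw [σL]; exact CL k _ hv.2⟩
    · intro k v hv
      rw [Submodule.mem_inf, Submodule.mem_comap] at hv ⊢
      refine ⟨CG k v hv.1 hv.2, ?_⟩
      rw [σG]
      exact C.neg_mem (CG k (σ v) hv.2 (by rw [σσ]; exact hv.1))
  have humem : u ∈ C ⊓ Submodule.comap σ C := by
    have hσu : σ u = u := by
      simp only [σ, LinearMap.sub_apply, LinearMap.smul_apply, LinearMap.id_apply,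
        Pid u hu.mem_even]
      module
    rw [Submodule.mem_inf, Submodule.mem_comap, hσu]
    exact ⟨(memC u).mpr ⟨hx, hy⟩, (memC u).mpr ⟨hx, hy⟩⟩
  have htop : C ⊓ Submodule.comap σ C = ⊤ := hu.gen _ hsub humem
  have hC : ∀ v : V.carrier, v ∈ C := by
    intro v
    have : v ∈ C ⊓ Submodule.comap σ C := by rw [htop]; trivial
    exact this.1
  have hall : ∀ (v : V.carrier) (w : S.carrier), tw.t v w ∈ W := by
    intro v w
    have hw : w ∈ Submodule.span ℂ (Set.range F.x ∪ Set.range F.y) := by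
      rw [F.spans]; trivial
    induction hw using Submodule.span_induction with
    | mem w hw =>
      rcases hw with ⟨m, rfl⟩ | ⟨m, rfl⟩
      · exact ((memC v).mp (hC v)).1 m
      · exact ((memC v).mp (hC v)).2 m
    | zero => simp [W.zero_mem]
    | add w₁ w₂ _ _ h1 h2 => rw [map_add]; exact W.add_mem h1 h2
    | smul r w _ h1 => rw [map_smul]; exact W.smul_mem r h1
  rw [eq_top_iff]
  rintro z -
  obtain ⟨ζ, rfl⟩ := tw.isTensor.2 z
  induction ζ using TensorProduct.induction_on with
  | zero => simp [W.zero_mem]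
  | tmul v w => rw [TensorProduct.lift.tmul]; exact hall v w
  | add ζ η hζ hη => rw [map_add]; exact W.add_mem hζ hη
end
end

section
/- Let a, b ∈ ℂ with 0 ≤ Re(a) < 1 and b ≠ 1, and let V be a highest weight module over the Neveu–Schwarz algebra with highest weight vector u of highest weight (c, h) such that dim V ≥ 2 (V is nontrivial). Then for every m ∈ (1/2)ℤ, the eigenspace of the operator L₀ on V ⊗ SA'_{a,b} with eigenvalue m + h + a is infinite-dimensional. -/
noncomputable section

open Submodule

open TensorProduct in
private lemma tensor_indep {Vc Sc : Type} [AddCommGroup Vc] [Module ℂ Vc]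
    [AddCommGroup Sc] [Module ℂ Sc] {κ : Type} {y : κ → Sc}
    (hy : LinearIndependent ℂ y) (σ : ℕ → κ) (hσ : Function.Injective σ)
    (v : ℕ → Vc) (hv : ∀ i, v i ≠ 0) :
    LinearIndependent ℂ (fun i => v i ⊗ₜ[ℂ] y (σ i) : ℕ → Vc ⊗[ℂ] Sc) := by
  classical
  have hyσ : LinearIndependent ℂ (y ∘ σ) := hy.comp σ hσ
  have hset : LinearIndepOn ℂ id (Set.range (y ∘ σ)) := (linearIndepOn_id_range_iff hyσ.injective).mpr hyσ
  set B := Module.Basis.extend hset with hB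
  have hmem : ∀ i : ℕ, y (σ i) ∈ hset.extend (Set.subset_univ _) :=
    fun i => hset.subset_extend _ ⟨i, rfl⟩
  rw [linearIndependent_iff']
  intro s g hsum i hi
  set φ : Vc ⊗[ℂ] Sc →ₗ[ℂ] Vc :=
    (TensorProduct.rid ℂ Vc).toLinearMap ∘ₗ
      LinearMap.lTensor Vc (B.coord ⟨y (σ i), hmem i⟩) with hφdef
  have hcoord : ∀ j : ℕ, B.coord ⟨y (σ i), hmem i⟩ (y (σ j))
      = if j = i then (1 : ℂ) else 0 := by
    intro j
    have h1 : B ⟨y (σ j), hmem j⟩ = y (σ j) := Module.Basis.extend_apply_self hset _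
    rw [← h1, Module.Basis.coord_apply, Module.Basis.repr_self, Finsupp.single_apply]
    by_cases hji : j = i
    · subst hji; simp
    · rw [if_neg, if_neg hji]
      intro hc
      have h2 : y (σ j) = y (σ i) := congrArg Subtype.val hc
      exact hji (hσ (hy.injective h2))
  have hφ : ∀ j : ℕ, φ (v j ⊗ₜ[ℂ] y (σ j)) = (if j = i then (1:ℂ) else 0) • v j := by
    intro j
    rw [hφdef]
    simp only [LinearMap.coe_comp, Function.comp_apply, LinearMap.lTensor_tmul,
      LinearEquiv.coe_coe, TensorProduct.rid_tmul, hcoord j]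
  have h0 := congrArg φ hsum
  rw [map_sum, map_zero] at h0
  simp only [map_smul, hφ] at h0
  rw [Finset.sum_eq_single_of_mem i hi] at h0
  · simp only [eq_self_iff_true, if_true, one_smul] at h0
    rcases smul_eq_zero.mp h0 with h | h
    · exact h
    · exact absurd h (hv i)
  · intro j _ hji
    simp [if_neg hji]

section ChainLemmas

open Function

private lemma eigen_chain_L0 {c h : ℂ} (V : NSMod c) (u : V.carrier) (hu : IsHW h V u)
    (j : ℕ) : ∀ d : ℕ,
    V.L 0 ((⇑(V.G (-(j:ℤ))))^[d] u)
      = (h - (d : ℂ) * (2*(j:ℂ) - 1)/2) • (⇑(V.G (-(j:ℤ))))^[d] u := by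
  intro d
  induction d with
  | zero =>
      simp only [Function.iterate_zero, id_eq]
      rw [hu.hw0]
      norm_num
  | succ d ih =>
      rw [Function.iterate_succ_apply']
      have hrel := V.rel_LG 0 (-(j:ℤ)) ((⇑(V.G (-(j:ℤ))))^[d] u)
      rw [sub_eq_iff_eq_add, zero_add] at hrel
      rw [hrel, ih, map_smul, ← add_smul]
      congr 1
      push_cast
      ring

private def cBeta (h γ σ : ℂ) : ℕ → ℂ
  | 0 => 0
  | d+1 => 2*h - 2*(d:ℂ)*σ - γ - cBeta h γ σ d

private lemma cBeta_closed (h γ σ : ℂ) : ∀ n : ℕ,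
    cBeta h γ σ (2*n) = -(2*(n:ℂ))*σ ∧ cBeta h γ σ (2*n+1) = 2*h - γ - 2*(n:ℂ)*σ := by
  intro n
  induction n with
  | zero =>
      constructor
      · norm_num [cBeta]
      · norm_num [cBeta]
  | succ n ih =>
      obtain ⟨ih1, ih2⟩ := ih
      have e1 : 2*(n+1) = (2*n+1)+1 := by omega
      constructor
      · rw [e1, show cBeta h γ σ ((2*n+1)+1)
            = 2*h - 2*((2*n+1 : ℕ):ℂ)*σ - γ - cBeta h γ σ (2*n+1) from rfl, ih2]
        push_cast
        ring
      · rw [show cBeta h γ σ (2*(n+1)+1)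
            = 2*h - 2*((2*(n+1) : ℕ):ℂ)*σ - γ - cBeta h γ σ (2*(n+1)) from rfl]
        rw [e1, show cBeta h γ σ ((2*n+1)+1)
            = 2*h - 2*((2*n+1 : ℕ):ℂ)*σ - γ - cBeta h γ σ (2*n+1) from rfl, ih2]
        push_cast
        ring

private lemma chain_B {c h : ℂ} (V : NSMod c) (u : V.carrier) (hu : IsHW h V u)
    (j : ℕ) (hj : 1 ≤ j) : ∀ d : ℕ,
    V.G ((j:ℤ)-1) ((⇑(V.G (-(j:ℤ))))^[d+1] u)
      = cBeta h ((1/3)*(((j:ℂ) - 1/2)^2 - 1/4)*c) ((j:ℂ) - 1/2) (d+1)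
          • (⇑(V.G (-(j:ℤ))))^[d] u := by
  have hkl : (j:ℤ)-1 + -(j:ℤ) + 1 = 0 := by ring
  intro d
  induction d with
  | zero =>
      rw [Function.iterate_succ_apply', Function.iterate_zero_apply]
      have hrel := V.rel_GG ((j:ℤ)-1) (-(j:ℤ)) u
      rw [hkl, if_pos rfl] at hrel
      rw [hu.hwG ((j:ℤ)-1) (by omega), map_zero, add_zero, hu.hw0, smul_smul] at hrel
      rw [hrel, ← sub_smul]
      congr 1
      simp only [cBeta]
      push_cast
      ring
  | succ d ih =>
      rw [Function.iterate_succ_apply']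
      have hrel := V.rel_GG ((j:ℤ)-1) (-(j:ℤ)) ((⇑(V.G (-(j:ℤ))))^[d+1] u)
      rw [hkl, if_pos rfl] at hrel
      rw [ih, map_smul, ← Function.iterate_succ_apply' (⇑(V.G (-(j:ℤ)))) d u] at hrel
      rw [eigen_chain_L0 V u hu j (d+1), smul_smul] at hrel
      rw [eq_sub_of_add_eq hrel, ← sub_smul, ← sub_smul]
      congr 1
      simp only [cBeta]
      push_cast
      ring

private lemma chain_death {c h : ℂ} (V : NSMod c) (u : V.carrier) (hu : IsHW h V u)
    (j : ℕ) (hj : 1 ≤ j) (hdead : ∃ d : ℕ, (⇑(V.G (-(j:ℤ))))^[d] u = 0) :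
    ∃ n : ℕ, 2*h - (1/3)*(((j:ℂ) - 1/2)^2 - 1/4)*c = (n:ℂ)*(2*(j:ℂ)-1)
      ∧ (⇑(V.G (-(j:ℤ))))^[2*n] u ≠ 0 ∧ (⇑(V.G (-(j:ℤ))))^[2*n+1] u = 0 := by
  classical
  set γ := (1/3)*(((j:ℂ) - 1/2)^2 - 1/4)*c with hγ
  set σc := (j:ℂ) - 1/2 with hσc
  set d0 := Nat.find hdead with hd0def
  have hd0 : (⇑(V.G (-(j:ℤ))))^[d0] u = 0 := Nat.find_spec hdead
  have hmin : ∀ e, e < d0 → (⇑(V.G (-(j:ℤ))))^[e] u ≠ 0 := fun e he => Nat.find_min hdead he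
  have hne0 : d0 ≠ 0 := by
    intro h0
    rw [h0, Function.iterate_zero_apply] at hd0
    exact hu.ne_zero hd0
  obtain ⟨e, he⟩ : ∃ e, d0 = e + 1 := ⟨d0 - 1, by omega⟩
  have hBe := chain_B V u hu j hj e
  have h1 : (⇑(V.G (-(j:ℤ))))^[e+1] u = 0 := he ▸ hd0
  rw [h1, map_zero] at hBe
  have hc : cBeta h γ σc (e+1) = 0 := by
    rcases smul_eq_zero.mp hBe.symm with hcc | hw
    · exact hcc
    · exact absurd hw (hmin e (by omega))
  rcases Nat.even_or_odd (e+1) with ⟨n, hn⟩ | ⟨n, hn⟩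
  · exfalso
    have h2 := (cBeta_closed h γ σc n).1
    rw [show e+1 = 2*n by omega, h2] at hc
    have hn1 : 1 ≤ n := by omega
    have hσ0 : σc ≠ 0 := by
      rw [hσc]
      intro hs
      have h3 : ((2*j : ℕ) : ℂ) = ((1:ℕ):ℂ) := by push_cast; linear_combination 2*hs
      have := Nat.cast_injective h3
      omega
    have hnc : ((n:ℂ)) ≠ 0 := Nat.cast_ne_zero.mpr (by omega)
    rcases mul_eq_zero.mp hc with h4 | h4
    · rw [neg_eq_zero] at h4
      rcases mul_eq_zero.mp h4 with h5 | h5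
      · norm_num at h5
      · exact hnc h5
    · exact hσ0 h4
  · refine ⟨n, ?_, ?_, ?_⟩
    · have h2 := (cBeta_closed h γ σc n).2
      rw [show e+1 = 2*n+1 by omega, h2] at hc
      rw [hγ] at hc ⊢
      rw [hσc] at hc
      linear_combination hc
    · exact hmin (2*n) (by omega)
    · rw [show 2*n+1 = d0 by omega]
      exact hd0

private lemma trivial_case {c h : ℂ} (V : NSMod c) (u : V.carrier) (hu : IsHW h V u)
    (hG : ∀ j : ℕ, 1 ≤ j → V.G (-(j:ℤ)) u = 0)
    (hdim : 2 ≤ Module.rank ℂ V.carrier) : False := by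
  have hGneg : ∀ k : ℤ, k ≤ -1 → V.G k u = 0 := by
    intro k hk
    have h1 : k = -((k.natAbs : ℕ) : ℤ) := by omega
    rw [h1]
    exact hG k.natAbs (by omega)
  have hLneg : ∀ m : ℤ, m ≤ -1 → V.L m u = 0 := by
    intro m hm
    have hrel := V.rel_GG (-1) m u
    have hkl : (-1:ℤ) + m + 1 = m := by ring
    rw [hkl, if_neg (by omega : ¬ m = 0)] at hrel
    rw [hGneg m hm, hGneg (-1) (by omega), map_zero, map_zero, add_zero,
      zero_smul, sub_zero] at hrel
    have h2 : (2:ℂ) • V.L m u = 0 := hrel.symm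
    rcases smul_eq_zero.mp h2 with h3 | h3
    · norm_num at h3
    · exact h3
  set W : Submodule ℂ V.carrier := Submodule.span ℂ {u} with hW
  have huW : u ∈ W := Submodule.mem_span_singleton_self u
  have hsub : V.IsSubmodule W := by
    constructor
    · intro m v hv
      rw [hW, Submodule.mem_span_singleton] at hv
      obtain ⟨α, rfl⟩ := hv
      rw [map_smul]
      apply Submodule.smul_mem
      rcases lt_trichotomy m 0 with hm | hm | hm
      · rw [hLneg m (by omega)]; exact W.zero_mem
      · rw [hm, hu.hw0]; exact Submodule.smul_mem _ _ huW
      · rw [hu.hwL m (by omega)]; exact W.zero_mem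
    · intro k v hv
      rw [hW, Submodule.mem_span_singleton] at hv
      obtain ⟨α, rfl⟩ := hv
      rw [map_smul]
      apply Submodule.smul_mem
      rcases lt_or_ge k 0 with hk | hk
      · rw [hGneg k (by omega)]; exact W.zero_mem
      · rw [hu.hwG k hk]; exact W.zero_mem
  have htop := hu.gen W hsub huW
  have hr1 : Module.rank ℂ V.carrier ≤ 1 := by
    calc Module.rank ℂ V.carrier
        = Module.rank ℂ ↥(⊤ : Submodule ℂ V.carrier) := (rank_top ℂ _).symm
      _ = Module.rank ℂ ↥W := by rw [htop]
      _ ≤ 1 := by simpa using rank_span_le (R := ℂ) ({u} : Set V.carrier)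
  have h2 : (2:Cardinal) ≤ 1 := hdim.trans hr1
  norm_num at h2

private lemma exists_eigen_seq {c h : ℂ} (V : NSMod c) (u : V.carrier) (hu : IsHW h V u)
    (hdim : 2 ≤ Module.rank ℂ V.carrier) :
    ∃ g : ℕ → ℕ, StrictMono g ∧
      ∀ i, ∃ v : V.carrier, v ≠ 0 ∧ V.L 0 v = (h - ((g i : ℕ) : ℂ)/2) • v := by
  classical
  by_cases hsur : ∃ j : ℕ, 1 ≤ j ∧ ∀ d : ℕ, (⇑(V.G (-(j:ℤ))))^[d] u ≠ 0
  · obtain ⟨j, hj, hne⟩ := hsur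
    obtain ⟨j', rfl⟩ : ∃ j', j = j' + 1 := ⟨j - 1, by omega⟩
    refine ⟨fun i => i * (2*j'+1), ?_, fun i => ⟨_, hne i, ?_⟩⟩
    · intro x y hxy
      exact mul_lt_mul_of_pos_right hxy (by omega)
    · have heig := eigen_chain_L0 V u hu (j'+1) i
      have hsc : (h - ((i * (2*j'+1) : ℕ) : ℂ)/2)
          = (h - (i : ℂ) * (2*((j'+1 : ℕ):ℂ) - 1)/2) := by
        push_cast
        ring
      rw [hsc]
      exact heig
  · push_neg at hsur
    have hall : ∀ j : ℕ, 1 ≤ j →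
        ∃ n : ℕ, 2*h - (1/3)*(((j:ℂ) - 1/2)^2 - 1/4)*c = (n:ℂ)*(2*(j:ℂ)-1)
          ∧ (⇑(V.G (-(j:ℤ))))^[2*n] u ≠ 0 ∧ (⇑(V.G (-(j:ℤ))))^[2*n+1] u = 0 := by
      intro j hj
      obtain ⟨d, hd⟩ := hsur j hj
      exact chain_death V u hu j hj ⟨d, hd⟩
    choose! n hn1 hn2 hn3 using hall
    have e1 : 2*h = ((n 1 : ℕ) : ℂ) := by
      have h1 := hn1 1 le_rfl
      push_cast at h1
      linear_combination h1
    have e2 : 2*h - (2/3)*c = 3*((n 2 : ℕ):ℂ) := by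
      have h1 := hn1 2 (by omega)
      push_cast at h1
      linear_combination h1
    have ec : c = 3*(((n 1 : ℕ):ℂ) - 3*((n 2 : ℕ):ℂ))/2 := by
      linear_combination (3/2)*e1 - (3/2)*e2
    have intEq : ∀ j : ℕ, 1 ≤ j →
        2*((n 1 : ℕ):ℤ) - (j:ℤ)*((j:ℤ)-1)*(((n 1:ℕ):ℤ) - 3*((n 2:ℕ):ℤ))
          = 2*(2*(j:ℤ)-1)*((n j : ℕ):ℤ) := by
      intro j hj
      have hC := hn1 j hj
      have hcx : ((2*((n 1 : ℕ):ℤ) - (j:ℤ)*((j:ℤ)-1)*(((n 1:ℕ):ℤ) - 3*((n 2:ℕ):ℤ)) : ℤ) : ℂ)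
          = ((2*(2*(j:ℤ)-1)*((n j : ℕ):ℤ) : ℤ) : ℂ) := by
        push_cast
        linear_combination 2*hC - 2*e1 + (2/3)*((j:ℂ)^2 - (j:ℂ))*ec
      exact_mod_cast hcx
    have hdvd : ∀ j : ℕ, 1 ≤ j →
        (2*(j:ℤ)-1) ∣ (8*((n 1:ℕ):ℤ) + (((n 1:ℕ):ℤ) - 3*((n 2:ℕ):ℤ))) := by
      intro j hj
      exact ⟨8*((n j : ℕ):ℤ) + (((n 1:ℕ):ℤ) - 3*((n 2:ℕ):ℤ))*(2*(j:ℤ)-1),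
        by linear_combination 4*(intEq j hj)⟩
    set q : ℤ := ((n 1:ℕ):ℤ) - 3*((n 2:ℕ):ℤ) with hqdef
    have hz : 8*((n 1:ℕ):ℤ) + q = 0 := by
      by_contra hne0
      have hd := hdvd ((8*((n 1:ℕ):ℤ) + q).natAbs + 1) (by omega)
      have habs := Int.le_of_dvd (abs_pos.mpr hne0) ((dvd_abs _ _).mpr hd)
      rw [Int.abs_eq_natAbs] at habs
      omega
    by_cases hN : n 1 = 0
    · exfalso
      apply trivial_case V u hu ?_ hdim
      intro j hj
      have hI := intEq j hj
      have hq0 : q = 0 := by omega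
      have hn10 : ((n 1 : ℕ):ℤ) = 0 := by omega
      have h0 : (0:ℤ) = 2*(2*(j:ℤ)-1)*((n j : ℕ):ℤ) := by
        rw [← hI, hq0, hn10]; ring
      have hnj : n j = 0 := by
        rcases mul_eq_zero.mp h0.symm with h3 | h3
        · exfalso; omega
        · omega
      have h4 := hn3 j hj
      rw [hnj] at h4
      simpa using h4
    · have hq : q = -8*((n 1:ℕ):ℤ) := by omega
      have hnj : ∀ j : ℕ, 1 ≤ j → ((n j : ℕ):ℤ) = ((n 1:ℕ):ℤ)*(2*(j:ℤ)-1) := by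
        intro j hj
        have hI := intEq j hj
        have h2j : (2*(j:ℤ)-1) ≠ 0 := by omega
        have hmul : (2*(j:ℤ)-1) * (2*((n j:ℕ):ℤ))
            = (2*(j:ℤ)-1) * (2*(((n 1:ℕ):ℤ)*(2*(j:ℤ)-1))) := by
          linear_combination -hI - (j:ℤ)*((j:ℤ)-1)*hq
        have := mul_left_cancel₀ h2j hmul
        omega
      refine ⟨fun i => 2*(n 1)*(2*i+1)^2, ?_, ?_⟩
      · intro x y hxy
        have h1 : (2*x+1)^2 < (2*y+1)^2 := Nat.pow_lt_pow_left (by omega) (by omega)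
        exact mul_lt_mul_of_pos_left h1 (by omega)
      · intro i
        refine ⟨_, hn2 (i+1) (by omega), ?_⟩
        have heig := eigen_chain_L0 V u hu (i+1) (2 * n (i+1))
        have hcast : ((n (i+1) : ℕ):ℂ) = ((n 1 : ℕ):ℂ)*(2*((i+1:ℕ):ℂ)-1) := by
          exact_mod_cast hnj (i+1) (by omega)
        have hsc : (h - ((2*(n 1)*(2*i+1)^2 : ℕ):ℂ)/2)
            = (h - ((2 * n (i+1) : ℕ):ℂ) * (2*((i+1:ℕ):ℂ) - 1)/2) := by
          push_cast at hcast ⊢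
          rw [hcast]
          ring
        rw [hsc]
        exact heig

end ChainLemmas


/-- if `V` is a nontrivial (`dim V ≥ 2`) highest weight
module with highest weight `(c,h)`, then every `L₀`-eigenspace of
`V ⊗ SA'_{a,b}` with eigenvalue `m + h + a` (`m ∈ (1/2)ℤ`, recorded as
`m = p/2`) is infinite-dimensional. -/
theorem tensor_weight_spaces_infinite_dimensional (a b c h : ℂ)
    (ha0 : 0 ≤ a.re) (ha1 : a.re < 1) (hb : b ≠ 1)
    (V : NSMod c) (u : V.carrier) (hu : IsHW h V u)
    (hdim : 2 ≤ Module.rank ℂ V.carrier)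
    (S : NSMod 0) (F : SA'Family a b S)
    (T : NSMod c) (tw : TensorWitness V S T) (p : ℤ) :
    ¬ Module.Finite ℂ
      ↥(LinearMap.ker (T.L 0 - ((p : ℂ) / 2 + h + a) •
          (LinearMap.id : T.carrier →ₗ[ℂ] T.carrier))) := by
  classical
  intro hfin
  obtain ⟨g, hg, hvex⟩ := exists_eigen_seq V u hu hdim
  choose v hvne hveig using hvex
  set K : ℕ := p.natAbs + 1 with hK
  set y' : (ℤ ⊕ {j : ℤ // j ≠ (-1:ℤ)}) → S.carrier
    := Sum.elim F.x (fun j => F.y j.1) with hy'def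
  have hy' : LinearIndependent ℂ y' := by
    by_cases hsp : a = 1/2 ∧ b = 1/2
    · exact (F.indep_special hsp).2
    · have h0 := F.indep_generic hsp
      have hcomp : y' = (Sum.elim F.x F.y) ∘ (Sum.map id Subtype.val) := by
        funext z; cases z <;> rfl
      rw [hcomp]
      exact h0.comp _ (Function.Injective.sumMap (fun _ _ hz => hz) Subtype.val_injective)
  have hgK : ∀ i : ℕ, 1 ≤ p + (g (i+K) : ℤ) := by
    intro i
    have h1 : i + K ≤ g (i+K) := hg.le_apply
    omega
  set σ : ℕ → (ℤ ⊕ {j : ℤ // j ≠ (-1:ℤ)}) := fun i =>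
    if (2:ℤ) ∣ (p + (g (i+K) : ℤ)) then Sum.inl ((p + (g (i+K) : ℤ))/2)
    else Sum.inr ⟨(p + (g (i+K) : ℤ) - 1)/2, by
      have := hgK i; omega⟩ with hσdef
  have hσinj : Function.Injective σ := by
    intro i1 i2 heq
    have hKinj : g (i1+K) = g (i2+K) → i1 = i2 := by
      intro hgg
      have := hg.injective hgg
      omega
    simp only [hσdef] at heq
    by_cases h1 : (2:ℤ) ∣ (p + (g (i1+K) : ℤ)) <;>
      by_cases h2 : (2:ℤ) ∣ (p + (g (i2+K) : ℤ))
    · rw [if_pos h1, if_pos h2] at heq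
      simp only [Sum.inl.injEq] at heq
      apply hKinj; omega
    · rw [if_pos h1, if_neg h2] at heq
      exact absurd heq (by simp)
    · rw [if_neg h1, if_pos h2] at heq
      exact absurd heq (by simp)
    · rw [if_neg h1, if_neg h2] at heq
      simp only [Sum.inr.injEq, Subtype.mk.injEq] at heq
      apply hKinj; omega
  have hSeig : ∀ i : ℕ, S.L 0 (y' (σ i))
      = (a + ((p + (g (i+K) : ℤ) : ℤ):ℂ)/2) • y' (σ i) := by
    intro i
    by_cases he : (2:ℤ) ∣ (p + (g (i+K) : ℤ))
    · have hy1 : y' (σ i) = F.x ((p + (g (i+K) : ℤ))/2) := by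
        simp only [hσdef, hy'def, if_pos he, Sum.elim_inl]
      obtain ⟨r, hr⟩ := he
      have hdiv : (p + (g (i+K):ℤ))/2 = r := by omega
      rw [hy1, hdiv]
      have hL := F.act_Lx 0 r
      rw [zero_add] at hL
      rw [hL]
      congr 1
      have hrc : ((p + (g (i+K):ℤ) : ℤ):ℂ) = 2*(r:ℂ) := by exact_mod_cast hr
      rw [hrc]
      push_cast
      ring
    · have hy1 : y' (σ i) = F.y ((p + (g (i+K) : ℤ) - 1)/2) := by
        simp only [hσdef, hy'def, if_neg he, Sum.elim_inr]
      obtain ⟨r, hr⟩ : ∃ r : ℤ, p + (g (i+K):ℤ) = 2*r + 1 :=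
        ⟨(p + (g (i+K):ℤ) - 1)/2, by omega⟩
      have hdiv : (p + (g (i+K):ℤ) - 1)/2 = r := by omega
      rw [hy1, hdiv]
      have hL := F.act_Ly 0 r
      rw [zero_add] at hL
      rw [hL]
      congr 1
      have hrc : ((p + (g (i+K):ℤ) : ℤ):ℂ) = 2*(r:ℂ) + 1 := by exact_mod_cast hr
      rw [hrc]
      push_cast
      ring
  set lam : ℂ := (p : ℂ) / 2 + h + a with hlam
  have hmem : ∀ i : ℕ, tw.t (v (i+K)) (y' (σ i)) ∈
      LinearMap.ker (T.L 0 - lam • (LinearMap.id : T.carrier →ₗ[ℂ] T.carrier)) := by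
    intro i
    rw [LinearMap.mem_ker, LinearMap.sub_apply, LinearMap.smul_apply, LinearMap.id_apply]
    rw [tw.actL 0 (v (i+K)) (y' (σ i)), hveig (i+K), hSeig i]
    rw [map_smul, LinearMap.smul_apply, map_smul]
    rw [← add_smul, ← sub_smul]
    have hc0 : (h - ((g (i+K) : ℕ):ℂ)/2 + (a + ((p + (g (i+K) : ℤ) : ℤ):ℂ)/2)) - lam = 0 := by
      rw [hlam]; push_cast; ring
    rw [hc0, zero_smul]
  have hind0 : LinearIndependent ℂ
      (fun i : ℕ => (v (i+K)) ⊗ₜ[ℂ] y' (σ i) : ℕ → TensorProduct ℂ V.carrier S.carrier) :=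
    tensor_indep hy' σ hσinj (fun i => v (i+K)) (fun i => hvne (i+K))
  have hindT : LinearIndependent ℂ (fun i : ℕ => tw.t (v (i+K)) (y' (σ i))) := by
    have h2 := hind0.map' tw.isTensor.equiv.toLinearMap tw.isTensor.equiv.ker
    have hfun : (⇑tw.isTensor.equiv.toLinearMap ∘ (fun i : ℕ => (v (i+K)) ⊗ₜ[ℂ] y' (σ i)))
        = (fun i : ℕ => tw.t (v (i+K)) (y' (σ i))) := by
      funext i
      show tw.isTensor.equiv.toLinearMap ((v (i+K)) ⊗ₜ[ℂ] y' (σ i)) = _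
      rw [IsTensorProduct.equiv_toLinearMap]
      exact TensorProduct.lift.tmul _ _
    rw [hfun] at h2
    exact h2
  set Kker := LinearMap.ker (T.L 0 - lam • (LinearMap.id : T.carrier →ₗ[ℂ] T.carrier))
    with hKkerdef
  have hζ : LinearIndependent ℂ
      (fun i : ℕ => (⟨tw.t (v (i+K)) (y' (σ i)), hmem i⟩ : ↥Kker)) := by
    apply LinearIndependent.of_comp Kker.subtype
    exact hindT
  haveI := hfin
  have h1 : (Cardinal.aleph0 : Cardinal) ≤ Module.rank ℂ ↥Kker := hζ.aleph0_le_rank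
  have h2 := Module.rank_lt_aleph0 ℂ ↥Kker
  exact absurd (h1.trans_lt h2) (lt_irrefl _)
end
end
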